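/- arXiv:2604.25893 — 5 statements merged into one kernel-verified Lean document; each statement's English description precedes it below -/
import Mathlib

section
/- Let $X \subseteq \mathbb{Z}$ be a finite set with $|X| \geq 100$, and let $P$ be the smallest arithmetic progression containing $X$. If $|X|/|P| > 2/5$, then $P \subseteq 9X - 8X$. -/
/-- `P` is a (1-dimensional) arithmetic progression `{u, u+v, …, u+l·v}` with `v ≠ 0`. -/
def IsAP (P : Finset ℤ) : Prop :=
  ∃ (u v : ℤ) (l : ℕ), v ≠ 0 ∧ P = (Finset.range (l + 1)).image (fun i : ℕ => u + (i : ℤ) * v)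

/-- The set `mX - nX` of sums of `m` elements of `X` minus sums of `n` elements of `X`. -/
def sumsetSub (m n : ℕ) (X : Finset ℤ) : Set ℤ :=
  {z | ∃ (x : Fin m → ℤ) (y : Fin n → ℤ), (∀ i, x i ∈ X) ∧ (∀ j, y j ∈ X) ∧
    z = (∑ i, x i) - (∑ j, y j)}

open Finset


/-- membership in difference set -/
def inD (Y : Finset ℤ) (d : ℤ) : Prop := ∃ a ∈ Y, ∃ b ∈ Y, a - b = d

lemma inD_neg {Y : Finset ℤ} {d : ℤ} (h : inD Y d) : inD Y (-d) := by
  obtain ⟨a, ha, b, hb, hab⟩ := h; exact ⟨b, hb, a, ha, by omega⟩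

lemma inD_zero {Y : Finset ℤ} (h0 : (0:ℤ) ∈ Y) : inD Y 0 := ⟨0, h0, 0, h0, by ring⟩

lemma overlap (Y : Finset ℤ) (l t : ℤ) (hsub : Y ⊆ Finset.Icc 0 l) (h0 : (0:ℤ) ∈ Y) (ht : 0 ≤ t)
    (h3 : l + 2*t + 1 < 3 * Y.card) :
    inD Y t ∨ inD Y (2*t) := by
  have hl0 : (0:ℤ) ≤ l := (Finset.mem_Icc.mp (hsub h0)).2
  by_contra hcon
  push_neg at hcon
  obtain ⟨h1, h2⟩ := hcon
  set Y1 := Y.image (· + t) with hY1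
  set Y2 := Y.image (· + 2*t) with hY2
  have c1 : Y1.card = Y.card := Finset.card_image_of_injective _ (add_left_injective t)
  have c2 : Y2.card = Y.card := Finset.card_image_of_injective _ (add_left_injective (2*t))
  have d01 : Disjoint Y Y1 := by
    rw [Finset.disjoint_left]
    rintro z hz hz1
    obtain ⟨b, hb, rfl⟩ := Finset.mem_image.mp hz1
    exact h1 ⟨b + t, hz, b, hb, by ring⟩
  have d02 : Disjoint Y Y2 := by
    rw [Finset.disjoint_left]
    rintro z hz hz1
    obtain ⟨b, hb, rfl⟩ := Finset.mem_image.mp hz1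
    exact h2 ⟨b + 2*t, hz, b, hb, by ring⟩
  have d12 : Disjoint Y1 Y2 := by
    rw [Finset.disjoint_left]
    rintro z hz hz1
    obtain ⟨a, ha, rfl⟩ := Finset.mem_image.mp hz
    obtain ⟨b, hb, hba⟩ := Finset.mem_image.mp hz1
    exact h1 ⟨a, ha, b, hb, by omega⟩
  have hun : Y ∪ Y1 ∪ Y2 ⊆ Finset.Icc 0 (l + 2*t) := by
    intro z hz
    simp only [Finset.mem_union] at hz
    rcases hz with (hz | hz) | hz
    · have := hsub hz; rw [Finset.mem_Icc] at *; omega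
    · obtain ⟨a, ha, rfl⟩ := Finset.mem_image.mp hz
      have := hsub ha; rw [Finset.mem_Icc] at *; omega
    · obtain ⟨a, ha, rfl⟩ := Finset.mem_image.mp hz
      have := hsub ha; rw [Finset.mem_Icc] at *; omega
  have hcard : (Y ∪ Y1 ∪ Y2).card = 3 * Y.card := by
    rw [Finset.card_union_of_disjoint, Finset.card_union_of_disjoint d01] <;> [skip; skip]
    · omega
    · rw [Finset.disjoint_union_left]; exact ⟨d02, d12⟩
  have hle := Finset.card_le_card hun
  rw [hcard] at hle
  have hicc : (Finset.Icc (0:ℤ) (l+2*t)).card = (l + 2*t + 1 - 0).toNat := Int.card_Icc _ _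
  omega



/-- an adjacent pair of opposite parity -/
lemma adjpair (Y : Finset ℤ) (w w' : ℤ) (hw : w ∈ Y) (hw' : w' ∈ Y)
    (hlt : w < w') (hpar : w % 2 ≠ w' % 2) :
    ∃ a ∈ Y, ∃ b ∈ Y, a < b ∧ a % 2 ≠ b % 2 ∧ ∀ y ∈ Y, ¬ (a < y ∧ y < b) := by
  set S := Y.filter (fun y => w < y ∧ y ≤ w' ∧ y % 2 ≠ w % 2) with hS
  have hSne : S.Nonempty := ⟨w', by simp [hS, Finset.mem_filter, hw', hlt]; omega⟩
  set b := S.min' hSne with hb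
  have hbS : b ∈ S := S.min'_mem hSne
  rw [hS, Finset.mem_filter] at hbS
  obtain ⟨hbY, hwb, hbw', hbpar⟩ := hbS
  set S2 := Y.filter (fun y => w ≤ y ∧ y < b) with hS2
  have hS2ne : S2.Nonempty := ⟨w, by simp [hS2, Finset.mem_filter, hw, hwb]⟩
  set a := S2.max' hS2ne with ha
  have haS : a ∈ S2 := S2.max'_mem hS2ne
  rw [hS2, Finset.mem_filter] at haS
  obtain ⟨haY, hwa, hab⟩ := haS
  have hapar : a % 2 = w % 2 := by
    by_contra hne
    have haS' : a ∈ S := by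
      rw [hS, Finset.mem_filter]
      refine ⟨haY, ?_, by omega, hne⟩
      rcases lt_or_eq_of_le hwa with h | h
      · exact h
      · exact absurd h.symm (by intro hh; exact hne (by rw [hh]))
    exact absurd (S.min'_le a haS') (by omega)
  refine ⟨a, haY, b, hbY, hab, by omega, ?_⟩
  intro y hy ⟨h1, h2⟩
  have : y ∈ S2 := by rw [hS2, Finset.mem_filter]; exact ⟨hy, by omega, h2⟩
  exact absurd (S2.le_max' y this) (by omega)

/-- existence of a small positive odd difference -/
lemma odddiff (Y : Finset ℤ) (l : ℤ) (hsub : Y ⊆ Finset.Icc 0 l) (h0 : (0:ℤ) ∈ Y)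
    (ho : ∃ o ∈ Y, o % 2 = 1) :
    ∃ d, 0 < d ∧ d % 2 = 1 ∧ inD Y d ∧ (d = 1 ∨ d + 2 * (Y.card : ℤ) ≤ l + 4) := by
  by_cases h1 : ∃ y ∈ Y, y + 1 ∈ Y
  · obtain ⟨y, hy, hy1⟩ := h1
    exact ⟨1, one_pos, rfl, ⟨y+1, hy1, y, hy, by ring⟩, Or.inl rfl⟩
  · push_neg at h1
    obtain ⟨o, hoY, hopar⟩ := ho
    have hne : (0:ℤ) % 2 ≠ o % 2 := by omega
    have h0o : (0:ℤ) < o := by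
      rcases lt_or_eq_of_le (Finset.mem_Icc.mp (hsub hoY)).1 with h | h
      · exact h
      · omega
    obtain ⟨a, haY, b, hbY, hab, hpar, hmid⟩ := adjpair Y 0 o h0 hoY h0o hne
    have hd1 : 0 < b - a := by omega
    have hd2 : (b - a) % 2 = 1 := by omega
    refine ⟨b - a, hd1, hd2, ⟨b, hbY, a, haY, by ring⟩, Or.inr ?_⟩
    -- counting
    have hba3 : 3 ≤ b - a := by
      have : b - a ≠ 1 := by
        intro h
        have hba : a + 1 = b := by omega
        exact h1 a haY (by rw [hba]; exact hbY)
      omega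
    set Y1 := Y.image (· + 1) with hY1
    have c1 : Y1.card = Y.card := Finset.card_image_of_injective _ (add_left_injective 1)
    have d01 : Disjoint Y Y1 := by
      rw [Finset.disjoint_left]
      rintro z hz hz1
      obtain ⟨c, hc, rfl⟩ := Finset.mem_image.mp hz1
      exact h1 c hc hz
    set G := Finset.Icc (a+2) (b-1) with hG
    have dG : Disjoint (Y ∪ Y1) G := by
      rw [Finset.disjoint_left]
      rintro z hz hzG
      rw [hG, Finset.mem_Icc] at hzG
      rcases Finset.mem_union.mp hz with hz | hz
      · exact hmid z hz ⟨by omega, by omega⟩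
      · obtain ⟨c, hc, rfl⟩ := Finset.mem_image.mp hz
        exact hmid c hc ⟨by omega, by omega⟩
    have hun : (Y ∪ Y1) ∪ G ⊆ Finset.Icc 0 (l + 1) := by
      intro z hz
      rw [Finset.mem_Icc]
      have haIcc := Finset.mem_Icc.mp (hsub haY)
      have hbIcc := Finset.mem_Icc.mp (hsub hbY)
      rcases Finset.mem_union.mp hz with hz | hz
      · rcases Finset.mem_union.mp hz with hz | hz
        · have := Finset.mem_Icc.mp (hsub hz); omega
        · obtain ⟨c, hc, rfl⟩ := Finset.mem_image.mp hz
          have := Finset.mem_Icc.mp (hsub hc); omega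
      · rw [hG, Finset.mem_Icc] at hz; omega
    have hcard : ((Y ∪ Y1) ∪ G).card = 2 * Y.card + G.card := by
      rw [Finset.card_union_of_disjoint dG, Finset.card_union_of_disjoint d01]; omega
    have hle := Finset.card_le_card hun
    rw [hcard] at hle
    have hicc : (Finset.Icc (0:ℤ) (l+1)).card = (l + 1 + 1 - 0).toNat := Int.card_Icc _ _
    have hGc : G.card = (b - 1 + 1 - (a + 2)).toNat := Int.card_Icc _ _
    have hl0 : (0:ℤ) ≤ l := (Finset.mem_Icc.mp (hsub h0)).2
    omega


lemma nearest (Y : Finset ℤ) (l p : ℤ) (hsub : Y ⊆ Finset.Icc 0 l) (h0 : (0:ℤ) ∈ Y)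
    (hl : l ∈ Y) (hp : 0 ≤ p) (hpl : p ≤ l) :
    ∃ x ∈ Y, 2 * |p - x| + (Y.card : ℤ) ≤ l + 2 := by
  have hYne : Y.Nonempty := ⟨0, h0⟩
  set T := Y.image (fun y => |p - y|) with hT
  have hTne : T.Nonempty := hYne.image _
  set m := T.min' hTne with hm
  have hmT : m ∈ T := T.min'_mem hTne
  obtain ⟨x, hxY, hxm⟩ := Finset.mem_image.mp hmT
  have hmle : ∀ y ∈ Y, m ≤ |p - y| := fun y hy => T.min'_le _ (Finset.mem_image_of_mem _ hy)
  have hm0 : 0 ≤ m := by rw [← hxm]; exact abs_nonneg _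
  refine ⟨x, hxY, ?_⟩
  rw [hxm]
  by_cases hm1 : m = 0
  · have hcard : Y.card ≤ (Finset.Icc (0:ℤ) l).card := Finset.card_le_card hsub
    rw [Int.card_Icc] at hcard
    omega
  · -- m ≥ 1 : the window (p-m, p+m) avoids Y and sits inside [0,l]
    have hmp : m ≤ p := by
      have := hmle 0 h0
      rw [sub_zero, abs_of_nonneg hp] at this; omega
    have hmp' : m ≤ l - p := by
      have := hmle l hl
      rw [abs_of_nonpos (by omega)] at this; omega
    set G := Finset.Icc (p - m + 1) (p + m - 1) with hG
    have hdisj : Disjoint Y G := by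
      rw [Finset.disjoint_left]
      intro y hy hyG
      rw [hG, Finset.mem_Icc] at hyG
      have h1 := hmle y hy
      have h2 : |p - y| ≤ m - 1 := abs_le.mpr ⟨by omega, by omega⟩
      omega
    have hun : Y ∪ G ⊆ Finset.Icc 0 l := by
      intro z hz
      rcases Finset.mem_union.mp hz with hz | hz
      · exact hsub hz
      · rw [hG, Finset.mem_Icc] at hz; rw [Finset.mem_Icc]; omega
    have hle := Finset.card_le_card hun
    rw [Finset.card_union_of_disjoint hdisj] at hle
    have h1 : G.card = (p + m - 1 + 1 - (p - m + 1)).toNat := Int.card_Icc _ _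
    have h2 : (Finset.Icc (0:ℤ) l).card = (l + 1 - 0).toNat := Int.card_Icc _ _
    omega

theorem core (Y : Finset ℤ) (l : ℤ)
    (hsub : Y ⊆ Finset.Icc 0 l)
    (h0 : (0:ℤ) ∈ Y) (hl : l ∈ Y)
    (hodd : ∃ o ∈ Y, o % 2 = 1)
    (hn : 100 ≤ Y.card)
    (hdens : 2*l + 3 ≤ 5*(Y.card:ℤ))
    (p : ℤ) (hp : 0 ≤ p) (hpl : p ≤ l) :
    ∃ (a : Fin 9 → ℤ) (b : Fin 8 → ℤ),
      (∀ i, a i ∈ Y) ∧ (∀ j, b j ∈ Y) ∧ p = (∑ i, a i) - (∑ j, b j) := by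
  set n : ℤ := (Y.card : ℤ) with hnd
  have hn100 : (100:ℤ) ≤ n := by rw [hnd]; exact_mod_cast hn
  have hnl : n ≤ l + 1 := by
    have hcard : Y.card ≤ (Finset.Icc (0:ℤ) l).card := Finset.card_le_card hsub
    rw [Int.card_Icc] at hcard
    omega
  -- chunk representation
  have chunkRep : ∀ t : ℤ, 0 ≤ t → l + 2*t + 2 ≤ 3*n →
      ∃ u v, inD Y u ∧ inD Y v ∧ u + v = 2*t := by
    intro t ht h3
    rcases overlap Y l t hsub h0 ht (by omega) with hD | hD
    · exact ⟨t, t, hD, hD, by ring⟩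
    · exact ⟨2*t, 0, hD, inD_zero h0, by ring⟩
  -- six-fold representation of nonneg even numbers
  have sixRepPos : ∀ e : ℤ, 0 ≤ e → e % 2 = 0 → e ≤ 3*(3*n - l - 3) →
      ∃ d1 d2 d3 d4 d5 d6, inD Y d1 ∧ inD Y d2 ∧ inD Y d3 ∧ inD Y d4 ∧ inD Y d5 ∧ inD Y d6 ∧
        d1 + d2 + d3 + d4 + d5 + d6 = e := by
    intro e he hpar hbd
    set h := e / 2 with hh
    set c := (3*n - l - 2)/2 with hc
    set t1 := min h c with ht1
    set t2 := min (h - t1) c with ht2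
    set t3 := h - t1 - t2 with ht3
    obtain ⟨u1, v1, hu1, hv1, hs1⟩ := chunkRep t1 (by omega) (by omega)
    obtain ⟨u2, v2, hu2, hv2, hs2⟩ := chunkRep t2 (by omega) (by omega)
    obtain ⟨u3, v3, hu3, hv3, hs3⟩ := chunkRep t3 (by omega) (by omega)
    exact ⟨u1, v1, u2, v2, u3, v3, hu1, hv1, hu2, hv2, hu3, hv3, by omega⟩
  have sixRep : ∀ e : ℤ, e % 2 = 0 → -(3*(3*n - l - 3)) ≤ e → e ≤ 3*(3*n - l - 3) →
      ∃ d1 d2 d3 d4 d5 d6, inD Y d1 ∧ inD Y d2 ∧ inD Y d3 ∧ inD Y d4 ∧ inD Y d5 ∧ inD Y d6 ∧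
        d1 + d2 + d3 + d4 + d5 + d6 = e := by
    intro e hpar hlo hhi
    rcases le_or_gt 0 e with he | he
    · exact sixRepPos e he hpar hhi
    · obtain ⟨d1, d2, d3, d4, d5, d6, h1, h2, h3, h4, h5, h6, hs⟩ :=
        sixRepPos (-e) (by omega) (by omega) (by omega)
      exact ⟨-d1, -d2, -d3, -d4, -d5, -d6, inD_neg h1, inD_neg h2, inD_neg h3,
        inD_neg h4, inD_neg h5, inD_neg h6, by omega⟩
  -- nearest element
  obtain ⟨x, hxY, hx2⟩ := nearest Y l p hsub h0 hl hp hpl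
  set δ := p - x with hδ
  have habs1 : δ ≤ |δ| := le_abs_self δ
  have habs2 : -|δ| ≤ δ := neg_abs_le δ
  -- find d0 and even remainder e
  have key : ∃ d0 e, inD Y d0 ∧ e % 2 = 0 ∧ -(3*(3*n - l - 3)) ≤ e ∧ e ≤ 3*(3*n - l - 3) ∧
      d0 + e = δ := by
    rcases Int.emod_two_eq_zero_or_one δ with hpar | hpar
    · exact ⟨0, δ, inD_zero h0, hpar, by omega, by omega, by omega⟩
    · obtain ⟨d, hd0, hdpar, hdD, hdbd⟩ := odddiff Y l hsub h0 hodd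
      rcases le_or_gt 0 δ with hsgn | hsgn
      · exact ⟨d, δ - d, hdD, by omega, by omega, by omega, by omega⟩
      · exact ⟨-d, δ + d, inD_neg hdD, by omega, by omega, by omega, by omega⟩
  obtain ⟨d0, e, hd0D, hepar, helo, hehi, hde⟩ := key
  obtain ⟨d1, d2, d3, d4, d5, d6, h1, h2, h3, h4, h5, h6, hs⟩ := sixRep e hepar helo hehi
  obtain ⟨a0, ha0, b0, hb0, hab0⟩ := hd0D
  obtain ⟨a1, ha1, b1, hb1, hab1⟩ := h1
  obtain ⟨a2, ha2, b2, hb2, hab2⟩ := h2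
  obtain ⟨a3, ha3, b3, hb3, hab3⟩ := h3
  obtain ⟨a4, ha4, b4, hb4, hab4⟩ := h4
  obtain ⟨a5, ha5, b5, hb5, hab5⟩ := h5
  obtain ⟨a6, ha6, b6, hb6, hab6⟩ := h6
  refine ⟨![x, a0, a1, a2, a3, a4, a5, a6, x], ![b0, b1, b2, b3, b4, b5, b6, x], ?_, ?_, ?_⟩
  · intro i; fin_cases i <;> assumption
  · intro j; fin_cases j <;> assumption
  · simp [Fin.sum_univ_succ]
    omega

theorem stmt0 (X P : Finset ℤ) (hX : 100 ≤ X.card) (hP : IsAP P)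
    (hXP : (X : Set ℤ) ⊆ (P : Set ℤ))
    (hmin : ∀ P' : Finset ℤ, IsAP P' → (X : Set ℤ) ⊆ (P' : Set ℤ) → P.card ≤ P'.card)
    (hdens : (2 : ℝ) / 5 < (X.card : ℝ) / (P.card : ℝ)) :
    (P : Set ℤ) ⊆ sumsetSub 9 8 X := by
  obtain ⟨u, v, l, hv, hPeq⟩ := hP
  set L : ℤ := (l : ℤ) with hL
  set Y : Finset ℤ := (Finset.Icc 0 L).filter (fun i => u + i * v ∈ X) with hY
  have hYmem : ∀ i : ℤ, i ∈ Y ↔ (0 ≤ i ∧ i ≤ L ∧ u + i * v ∈ X) := by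
    intro i
    rw [hY, Finset.mem_filter, Finset.mem_Icc]
    tauto
  have hYsub : Y ⊆ Finset.Icc 0 L := by
    intro i hi; rw [Finset.mem_Icc]; have := (hYmem i).mp hi; tauto
  -- injectivity
  have injf : Function.Injective (fun i : ℤ => u + i * v) := by
    intro i j h
    simp only at h
    have : i * v = j * v := by linarith
    exact mul_right_cancel₀ hv this
  have injfn : Function.Injective (fun i : ℕ => u + (i : ℤ) * v) := by
    intro i j h
    have := injf h
    exact_mod_cast this
  -- X as image of Y
  have hXrep : ∀ x ∈ X, ∃ i, i ∈ Y ∧ x = u + i * v := by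
    intro x hx
    have hxP : x ∈ P := by exact_mod_cast hXP (by exact_mod_cast hx)
    rw [hPeq, Finset.mem_image] at hxP
    obtain ⟨i, hi, hxi⟩ := hxP
    rw [Finset.mem_range] at hi
    refine ⟨(i : ℤ), ?_, hxi.symm⟩
    rw [hYmem]
    refine ⟨by positivity, by omega, by rw [hxi]; exact hx⟩
  have himg : Y.image (fun i => u + i * v) = X := by
    ext x
    rw [Finset.mem_image]
    constructor
    · rintro ⟨i, hi, rfl⟩
      exact ((hYmem i).mp hi).2.2
    · intro hx
      obtain ⟨i, hi, hxi⟩ := hXrep x hx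
      exact ⟨i, hi, hxi.symm⟩
  have hcardY : Y.card = X.card := by
    rw [← himg, Finset.card_image_of_injective _ injf]
  have hPcard : P.card = l + 1 := by
    rw [hPeq, Finset.card_image_of_injective _ injfn, Finset.card_range]
  -- density
  have hYX : 100 ≤ Y.card := hcardY ▸ hX
  have hdens' : 2 * L + 3 ≤ 5 * (Y.card : ℤ) := by
    have hPpos : (0:ℝ) < (P.card : ℝ) := by
      rw [hPcard]; positivity
    rw [div_lt_div_iff₀ (by norm_num) hPpos] at hdens
    have h2 : (2:ℝ) * (P.card:ℝ) < (X.card:ℝ) * 5 := hdens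
    have h3 : 2 * P.card < X.card * 5 := by exact_mod_cast h2
    rw [hPcard] at h3
    rw [hL]
    rw [hcardY]
    push_cast
    omega
  have hYne : Y.Nonempty := Finset.card_pos.mp (by omega)
  -- l is large
  have hXPf : X ⊆ P := Finset.coe_subset.mp hXP
  have hlbig : 99 ≤ l := by
    have := Finset.card_le_card hXPf
    omega
  -- 0 ∈ Y by minimality
  have h0Y : (0:ℤ) ∈ Y := by
    set m := Y.min' hYne with hm
    have hmY : m ∈ Y := Y.min'_mem hYne
    have hmIcc := (hYmem m).mp hmY
    by_cases hm0 : m = 0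
    · rw [← hm0]; exact hmY
    · exfalso
      have hm1 : 1 ≤ m := by omega
      set P' := (Finset.range ((l - m.toNat) + 1)).image
        (fun i : ℕ => (u + m * v) + (i : ℤ) * v) with hP'
      have hAP' : IsAP P' := ⟨u + m * v, v, l - m.toNat, hv, rfl⟩
      have hsub' : (X : Set ℤ) ⊆ (P' : Set ℤ) := by
        intro x hx
        obtain ⟨i, hi, rfl⟩ := hXrep x (by exact_mod_cast hx)
        have hiY := (hYmem i).mp hi
        have hmi : m ≤ i := Y.min'_le i hi
        rw [hP', Finset.mem_coe, Finset.mem_image]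
        refine ⟨(i - m).toNat, ?_, ?_⟩
        · rw [Finset.mem_range]
          omega
        · have hcast : ((i - m).toNat : ℤ) = i - m := by omega
          rw [hcast]; ring
      have hge := hmin P' hAP' hsub'
      have hc' : P'.card = (l - m.toNat) + 1 := by
        rw [hP', Finset.card_image_of_injective, Finset.card_range]
        intro i j h
        have : (i:ℤ) * v = (j:ℤ) * v := by simp only at h; linarith
        exact_mod_cast mul_right_cancel₀ hv this
      rw [hPcard, hc'] at hge
      omega
  -- L ∈ Y by minimality
  have hLY : L ∈ Y := by
    set M := Y.max' hYne with hM
    have hMY : M ∈ Y := Y.max'_mem hYne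
    have hMIcc := (hYmem M).mp hMY
    by_cases hML : M = L
    · rw [← hML]; exact hMY
    · exfalso
      have hMl : M < L := lt_of_le_of_ne hMIcc.2.1 hML
      set P' := (Finset.range (M.toNat + 1)).image (fun i : ℕ => u + (i : ℤ) * v) with hP'
      have hAP' : IsAP P' := ⟨u, v, M.toNat, hv, rfl⟩
      have hsub' : (X : Set ℤ) ⊆ (P' : Set ℤ) := by
        intro x hx
        obtain ⟨i, hi, rfl⟩ := hXrep x (by exact_mod_cast hx)
        have hiY := (hYmem i).mp hi
        have hMi : i ≤ M := Y.le_max' i hi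
        rw [hP']
        rw [Finset.coe_image, Set.mem_image]
        refine ⟨i.toNat, ?_, ?_⟩
        · rw [Finset.mem_coe, Finset.mem_range]
          omega
        · have hcast : (i.toNat : ℤ) = i := by omega
          rw [hcast]
      have hge := hmin P' hAP' hsub'
      have hc' : P'.card = M.toNat + 1 := by
        rw [hP', Finset.card_image_of_injective _ injfn, Finset.card_range]
      rw [hPcard, hc'] at hge
      omega
  -- odd element by minimality
  have hoddY : ∃ o ∈ Y, o % 2 = 1 := by
    by_contra hall
    push_neg at hall
    have hall' : ∀ i ∈ Y, i % 2 = 0 := by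
      intro i hi
      have := hall i hi
      omega
    set P' := (Finset.range (l / 2 + 1)).image (fun i : ℕ => u + (i : ℤ) * (2 * v)) with hP'
    have hAP' : IsAP P' := ⟨u, 2 * v, l / 2, mul_ne_zero two_ne_zero hv, rfl⟩
    have hsub' : (X : Set ℤ) ⊆ (P' : Set ℤ) := by
      intro x hx
      obtain ⟨i, hi, rfl⟩ := hXrep x (by exact_mod_cast hx)
      have hiY := (hYmem i).mp hi
      have hieven := hall' i hi
      rw [hP']
      rw [Finset.coe_image, Set.mem_image]
      refine ⟨(i / 2).toNat, ?_, ?_⟩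
      · rw [Finset.mem_coe, Finset.mem_range]
        omega
      · have hcast : (((i / 2).toNat) : ℤ) = i / 2 := by omega
        rw [hcast]
        have : i / 2 * (2 * v) = i * v := by
          have h2 : 2 * (i / 2) = i := by omega
          linear_combination v * h2
        rw [this]
    have hge := hmin P' hAP' hsub'
    have hc' : P'.card = l / 2 + 1 := by
      rw [hP', Finset.card_image_of_injective, Finset.card_range]
      intro i j h
      simp only at h
      have : (i:ℤ) * (2*v) = (j:ℤ) * (2*v) := by linarith
      exact_mod_cast mul_right_cancel₀ (mul_ne_zero two_ne_zero hv) this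
    rw [hPcard, hc'] at hge
    omega
  -- main conclusion
  intro p hp
  rw [Finset.mem_coe, hPeq, Finset.mem_image] at hp
  obtain ⟨i, hi, hpi⟩ := hp
  rw [Finset.mem_range] at hi
  obtain ⟨a, b, haY, hbY, hsum⟩ := core Y L hYsub h0Y hLY hoddY hYX hdens'
    (i : ℤ) (by positivity) (by omega)
  refine ⟨fun k => u + (a k) * v, fun k => u + (b k) * v, ?_, ?_, ?_⟩
  · intro k; exact ((hYmem (a k)).mp (haY k)).2.2
  · intro k; exact ((hYmem (b k)).mp (hbY k)).2.2
  · have hA : (∑ k : Fin 9, (u + a k * v)) = 9 * u + (∑ k : Fin 9, a k) * v := by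
      rw [Finset.sum_add_distrib, Finset.sum_const, ← Finset.sum_mul]
      simp
    have hB : (∑ k : Fin 8, (u + b k * v)) = 8 * u + (∑ k : Fin 8, b k) * v := by
      rw [Finset.sum_add_distrib, Finset.sum_const, ← Finset.sum_mul]
      simp
    rw [hA, hB, ← hpi]
    linear_combination v * hsum
end

section
/- Let $c \in (0, 1/10)$ be real, let $Q \subseteq \mathbb{Z}$ be a proper 2-dimensional arithmetic progression, and let $X \subseteq Q$ be a set with $|X| \geq 100$ and $|X| \geq (1-c)|Q|$. Then $Q \subseteq 41X - 40X$. -/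
/-- `Q` is a proper 2-dimensional arithmetic progression. -/
def IsProper2Prog (Q : Finset ℤ) : Prop :=
  ∃ (a₀ a₁ a₂ : ℤ) (L₁ L₂ : ℕ),
    Q = ((Finset.range (L₁ + 1)) ×ˢ (Finset.range (L₂ + 1))).image
      (fun p : ℕ × ℕ => a₀ + (p.1 : ℤ) * a₁ + (p.2 : ℤ) * a₂) ∧
    Q.card = (L₁ + 1) * (L₂ + 1)

open Finset Pointwise in
/-- Covering lemma: a subset of `{0,…,L}` of density `> 2/3` satisfies `2A - A ⊇ {0,…,L}`. -/
lemma cover_aux {L : ℕ} {A : Finset ℕ} (hA : A ⊆ Finset.range (L+1))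
    (hcard : 2*(L+1) < 3*A.card) {t : ℕ} (ht : t ≤ L) :
    ∃ a₁ ∈ A, ∃ a₂ ∈ A, ∃ a₃ ∈ A, a₁ + a₂ = t + a₃ := by
  have hne : A.Nonempty := by rw [← Finset.card_pos]; omega
  have hSsub : A + A ⊆ Finset.range (2*L+1) := by
    intro x hx
    rw [Finset.mem_add] at hx
    obtain ⟨y, hy, z, hz, rfl⟩ := hx
    have h1 := Finset.mem_range.mp (hA hy)
    have h2 := Finset.mem_range.mp (hA hz)
    exact Finset.mem_range.mpr (by omega)
  have hTsub : A.image (t + ·) ⊆ Finset.range (2*L+1) := by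
    intro x hx
    simp only [Finset.mem_image] at hx
    obtain ⟨y, hy, rfl⟩ := hx
    have := Finset.mem_range.mp (hA hy)
    exact Finset.mem_range.mpr (by omega)
  have hCD : A.card + A.card - 1 ≤ (A + A).card :=
    cauchy_davenport_add_of_linearOrder_isCancelAdd hne hne
  have hT : (A.image (t + ·)).card = A.card :=
    Finset.card_image_of_injective _ (add_right_injective t)
  have hmeet : ((A + A) ∩ A.image (t + ·)).Nonempty := by
    by_contra h
    rw [Finset.not_nonempty_iff_eq_empty, ← Finset.disjoint_iff_inter_eq_empty] at h
    have hle : ((A+A) ∪ A.image (t + ·)).card ≤ 2*L+1 := by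
      have := Finset.card_le_card (Finset.union_subset hSsub hTsub)
      simpa using this
    rw [Finset.card_union_of_disjoint h] at hle
    omega
  obtain ⟨s, hs⟩ := hmeet
  rw [Finset.mem_inter] at hs
  obtain ⟨hs1, hs2⟩ := hs
  rw [Finset.mem_add] at hs1
  obtain ⟨b₁, h1, b₂, h2, rfl⟩ := hs1
  simp only [Finset.mem_image] at hs2
  obtain ⟨b₃, h3, he⟩ := hs2
  exact ⟨b₁, h1, b₂, h2, b₃, h3, by omega⟩

/-- Padding: `mX - nX ⊆ (m+k)X - (n+k)X` when `X` is nonempty. -/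
lemma pad_aux {X : Finset ℤ} {z x₀ : ℤ} (hx₀ : x₀ ∈ X) (m n k : ℕ)
    (h : z ∈ sumsetSub m n X) : z ∈ sumsetSub (m+k) (n+k) X := by
  obtain ⟨x, y, hx, hy, rfl⟩ := h
  refine ⟨Fin.append x (fun _ : Fin k => x₀), Fin.append y (fun _ : Fin k => x₀), ?_, ?_, ?_⟩
  · intro i
    refine Fin.addCases (fun i => ?_) (fun i => ?_) i
    · rw [Fin.append_left]; exact hx i
    · rw [Fin.append_right]; exact hx₀
  · intro i
    refine Fin.addCases (fun i => ?_) (fun i => ?_) i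
    · rw [Fin.append_left]; exact hy i
    · rw [Fin.append_right]; exact hx₀
  · rw [Fin.sum_univ_add, Fin.sum_univ_add]
    simp only [Fin.append_left, Fin.append_right]
    ring

theorem stmt1 (c : ℝ) (hc0 : 0 < c) (hc1 : c < 1 / 10)
    (Q X : Finset ℤ) (hQ : IsProper2Prog Q) (hXQ : X ⊆ Q)
    (hX100 : 100 ≤ X.card) (hdens : (1 - c) * (Q.card : ℝ) ≤ (X.card : ℝ)) :
    (Q : Set ℤ) ⊆ sumsetSub 41 40 X := by
  classical
  obtain ⟨a₀, a₁, a₂, L₁, L₂, hQeq, hQcard⟩ := hQ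
  set g : ℕ × ℕ → ℤ := fun p : ℕ × ℕ => a₀ + (p.1 : ℤ) * a₁ + (p.2 : ℤ) * a₂ with hgdef
  set G := (Finset.range (L₁+1)) ×ˢ (Finset.range (L₂+1)) with hGdef
  have hGcard : G.card = (L₁+1)*(L₂+1) := by
    simp [hGdef, Finset.card_product]
  have hinj : Set.InjOn g G := by
    rw [← Finset.card_image_iff, ← hQeq, hQcard, hGcard]
  have hXne : X.Nonempty := Finset.card_pos.mp (by omega)
  obtain ⟨x₀, hx₀⟩ := hXne
  -- 9|Q| < 10|X|
  have hQX : 9 * Q.card < 10 * X.card := by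
    have hQpos : (0:ℝ) < (Q.card : ℝ) := by
      have : 0 < Q.card := Finset.card_pos.mpr ⟨x₀, hXQ hx₀⟩
      exact_mod_cast this
    have h1 : (9:ℝ) * (Q.card : ℝ) < 10 * (X.card : ℝ) := by nlinarith
    exact_mod_cast h1
  -- rows
  set A : ℕ → Finset ℕ := fun j => (Finset.range (L₁+1)).filter (fun i => g (i, j) ∈ X)
    with hAdef
  have hAsub : ∀ j, A j ⊆ Finset.range (L₁+1) := fun j => Finset.filter_subset _ _
  have hAcard : ∀ j, (A j).card ≤ L₁ + 1 := fun j => by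
    have := Finset.card_le_card (hAsub j); simpa using this
  -- |X| = sum of row counts
  have himage : (G.filter (fun p => g p ∈ X)).image g = X := by
    ext x
    simp only [Finset.mem_image, Finset.mem_filter]
    constructor
    · rintro ⟨p, ⟨_, h⟩, rfl⟩; exact h
    · intro hx
      have hxQ : x ∈ Q := hXQ hx
      rw [hQeq] at hxQ
      obtain ⟨p, hp, rfl⟩ := Finset.mem_image.mp hxQ
      exact ⟨p, ⟨hp, hx⟩, rfl⟩
  have hXcard : (G.filter (fun p => g p ∈ X)).card = X.card := by
    conv_rhs => rw [← himage]
    exact (Finset.card_image_of_injOn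
      (hinj.mono (Finset.coe_subset.mpr (Finset.filter_subset (fun p => g p ∈ X) G)))).symm
  have hsum : ∑ j ∈ Finset.range (L₂+1), (A j).card = X.card := by
    rw [← hXcard, Finset.card_filter, hGdef, Finset.sum_product_right]
    refine Finset.sum_congr rfl fun j _ => ?_
    rw [hAdef]
    rw [Finset.card_filter]
  -- good rows
  set J := (Finset.range (L₂+1)).filter (fun j => 2*(L₁+1) < 3*(A j).card) with hJdef
  have hJsub : J ⊆ Finset.range (L₂+1) := Finset.filter_subset _ _
  have hJcard : 2*(L₂+1) < 3*J.card := by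
    have hsplit := Finset.sum_filter_add_sum_filter_not (Finset.range (L₂+1))
      (fun j => 2*(L₁+1) < 3*(A j).card) (fun j => 3 * (A j).card)
    have hB : J.card + ((Finset.range (L₂+1)).filter
        (fun j => ¬ 2*(L₁+1) < 3*(A j).card)).card = L₂ + 1 := by
      rw [hJdef]
      rw [Finset.card_filter_add_card_filter_not, Finset.card_range]
    set B := ((Finset.range (L₂+1)).filter (fun j => ¬ 2*(L₁+1) < 3*(A j).card)).card with hBdef
    have h1 : ∑ j ∈ J, 3 * (A j).card ≤ J.card * (3*(L₁+1)) := by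
      calc ∑ j ∈ J, 3 * (A j).card ≤ ∑ _j ∈ J, 3*(L₁+1) :=
            Finset.sum_le_sum (fun j _ => by have := hAcard j; omega)
        _ = J.card * (3*(L₁+1)) := by rw [Finset.sum_const, smul_eq_mul]
      
    have h2 : ∑ j ∈ (Finset.range (L₂+1)).filter (fun j => ¬ 2*(L₁+1) < 3*(A j).card),
        3 * (A j).card ≤ B * (2*(L₁+1)) := by
      calc ∑ j ∈ (Finset.range (L₂+1)).filter (fun j => ¬ 2*(L₁+1) < 3*(A j).card),
            3 * (A j).card
          ≤ ∑ _j ∈ (Finset.range (L₂+1)).filter (fun j => ¬ 2*(L₁+1) < 3*(A j).card),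
            2*(L₁+1) := Finset.sum_le_sum (fun j hj => by
              have := (Finset.mem_filter.mp hj).2; omega)
        _ = B * (2*(L₁+1)) := by rw [Finset.sum_const, smul_eq_mul]
    have htot : 3 * X.card ≤ J.card * (3*(L₁+1)) + B * (2*(L₁+1)) := by
      rw [← hsum, Finset.mul_sum]
      calc ∑ j ∈ Finset.range (L₂+1), 3 * (A j).card
          = (∑ j ∈ J, 3 * (A j).card) + ∑ j ∈ (Finset.range (L₂+1)).filter
              (fun j => ¬ 2*(L₁+1) < 3*(A j).card), 3 * (A j).card := by rw [hJdef, hsplit]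
        _ ≤ _ := Nat.add_le_add h1 h2
    -- 27*(L₁+1)*(L₂+1) < 30*X.card ≤ 10*(J.card*3K + B*2K)
    have hkey : (L₁+1) * (27 * (L₂+1)) < (L₁+1) * (30 * J.card + 20 * B) := by
      have e1 : 9 * ((L₁+1)*(L₂+1)) < 10 * X.card := by rw [← hQcard]; exact hQX
      nlinarith
    have := Nat.lt_of_mul_lt_mul_left hkey
    omega
  -- a good-row element decomposition
  have hrow : ∀ j ∈ J, ∀ l : ℕ, l ≤ L₁ → ∃ p₁ ∈ X, ∃ p₂ ∈ X, ∃ p₃ ∈ X,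
      (a₀ + (l:ℤ)*a₁ + (j:ℤ)*a₂) = p₁ + p₂ - p₃ := by
    intro j hj l hl
    have hj2 := (Finset.mem_filter.mp hj).2
    obtain ⟨i₁, h1, i₂, h2, i₃, h3, he⟩ := cover_aux (hAsub j) hj2 hl
    refine ⟨g (i₁, j), (Finset.mem_filter.mp h1).2, g (i₂, j), (Finset.mem_filter.mp h2).2,
      g (i₃, j), (Finset.mem_filter.mp h3).2, ?_⟩
    have hcast : (i₁:ℤ) + (i₂:ℤ) = (l:ℤ) + (i₃:ℤ) := by exact_mod_cast he
    simp only [hgdef]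
    push_cast
    linear_combination a₁ * hcast.symm
  -- main argument
  intro q hq
  rw [hQeq] at hq
  rw [Finset.coe_image, Set.mem_image] at hq
  obtain ⟨⟨l₁, l₂⟩, hp, rfl⟩ := hq
  rw [Finset.mem_coe, hGdef, Finset.mem_product, Finset.mem_range, Finset.mem_range] at hp
  obtain ⟨hl₁, hl₂⟩ := hp
  -- decompose l₂ over good rows
  obtain ⟨j₁, hj₁, j₂, hj₂, j₃, hj₃, hje⟩ := cover_aux hJsub hJcard (Nat.lt_succ_iff.mp hl₂)
  obtain ⟨p₁, hp₁, p₂, hp₂, p₃, hp₃, hr₁⟩ := hrow j₁ hj₁ l₁ (Nat.lt_succ_iff.mp hl₁)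
  obtain ⟨p₄, hp₄, p₅, hp₅, p₆, hp₆, hr₂⟩ := hrow j₂ hj₂ 0 (Nat.zero_le _)
  obtain ⟨p₇, hp₇, p₈, hp₈, p₉, hp₉, hr₃⟩ := hrow j₃ hj₃ 0 (Nat.zero_le _)
  have hjcast : (j₁:ℤ) + (j₂:ℤ) = (l₂:ℤ) + (j₃:ℤ) := by exact_mod_cast hje
  have h54 : g (l₁, l₂) ∈ sumsetSub 5 4 X := by
    refine ⟨![p₁, p₂, p₄, p₅, p₉], ![p₃, p₆, p₇, p₈], ?_, ?_, ?_⟩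
    · intro i; fin_cases i <;> assumption
    · intro i; fin_cases i <;> assumption
    · simp only [hgdef]
      have hs1 : ∑ i, (![p₁, p₂, p₄, p₅, p₉]) i = p₁ + p₂ + p₄ + p₅ + p₉ := by
        simp [Fin.sum_univ_five]
      have hs2 : ∑ i, (![p₃, p₆, p₇, p₈]) i = p₃ + p₆ + p₇ + p₈ := by
        simp [Fin.sum_univ_four]
      rw [hs1, hs2]
      push_cast at hr₁ hr₂ hr₃ ⊢
      linear_combination hr₁ + hr₂ - hr₃ - a₂ * hjcast
  exact pad_aux hx₀ 5 4 36 h54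
end

section
/- Let $\alpha \in (0,1)$ be any real number, let $\sigma \in (0, 1/100)$, and let $N$ be sufficiently large in terms of $\sigma$. Then the set $\{n \in \mathbb{Z} : |n| \leq N, \; \|n\alpha\|_{\mathbb{T}} < \sigma\}$ contains a proper $d$-dimensional arithmetic progression $P$ with $d \leq 2$ and $|P| \gg \sigma N$. -/
/-- `P` is a proper `d`-dimensional arithmetic progression in `ℤ`. -/
def IsProperProg (d : ℕ) (P : Finset ℤ) : Prop :=
  ∃ (a : ℤ) (v : Fin d → ℤ) (L : Fin d → ℕ),
    P = (Fintype.piFinset fun i => Finset.range (L i + 1)).image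
      (fun l => a + ∑ i, (l i : ℤ) * v i) ∧
    P.card = ∏ i, (L i + 1)

/-- Distance from a real number to the nearest integer. -/
noncomputable def distT (x : ℝ) : ℝ := |x - round x|



lemma distT_nonneg (x : ℝ) : 0 ≤ distT x := abs_nonneg _

lemma distT_le_int (x : ℝ) (m : ℤ) : distT x ≤ |x - m| := round_le x m

lemma distT_int_add (m : ℤ) (x : ℝ) : distT ((m : ℝ) + x) = distT x := by
  unfold distT
  rw [round_intCast_add]
  push_cast
  ring_nf

lemma distT_add_le (x y : ℝ) : distT (x + y) ≤ distT x + distT y := by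
  have h := distT_le_int (x + y) (round x + round y)
  unfold distT
  refine h.trans ?_
  push_cast
  have : x + y - ((round x : ℝ) + (round y : ℝ)) = (x - round x) + (y - round y) := by ring
  rw [this]
  exact abs_add_le _ _

lemma distT_int_mul (k : ℤ) (x : ℝ) : distT ((k : ℝ) * x) ≤ |(k : ℝ)| * distT x := by
  have h := distT_le_int ((k : ℝ) * x) (k * round x)
  refine h.trans ?_
  unfold distT
  push_cast
  rw [← abs_mul]
  apply le_of_eq
  congr 1
  ring

lemma distT_eq_abs (x : ℝ) (h : |x| ≤ 1 / 2) : distT x = |x| := by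
  refine le_antisymm (by simpa using distT_le_int x 0) ?_
  unfold distT
  rcases eq_or_ne (round x) 0 with h0 | h0
  · simp [h0]
  · have h1 : (1 : ℝ) ≤ |(round x : ℝ)| := by
      have := Int.one_le_abs h0
      exact_mod_cast this
    have h2 : |(round x : ℝ)| - |x| ≤ |x - round x| := by
      have := abs_sub_abs_le_abs_sub (x - round x) (-(round x : ℝ))
      simp only [sub_neg_eq_add, sub_add_cancel, abs_neg] at this
      linarith [abs_sub_abs_le_abs_sub ((round x : ℝ)) x, abs_sub_comm x ((round x):ℝ)]
    cases abs_cases x with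
    | inl hc => nlinarith
    | inr hc => nlinarith

lemma distT_sub_fract (x y : ℝ) : distT (x - y) ≤ |Int.fract x - Int.fract y| := by
  have hxy : x - y = ((⌊x⌋ - ⌊y⌋ : ℤ) : ℝ) + (Int.fract x - Int.fract y) := by
    unfold Int.fract
    push_cast
    ring
  rw [hxy, distT_int_add]
  simpa using distT_le_int (Int.fract x - Int.fract y) 0

lemma pigeon (α ε : ℝ) (hε : 0 < ε) (n : ℕ) (hn : (⌈1 / ε⌉ : ℝ) < n) :
    ∃ m : ℕ, 1 ≤ m ∧ m < n ∧ distT (m * α) < ε := by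
  classical
  set f : ℕ → ℤ := fun j => ⌊Int.fract ((j : ℝ) * α) / ε⌋ with hf
  have key : ∀ a b : ℕ, b < a → a < n → f a = f b →
      ∃ m : ℕ, 1 ≤ m ∧ m < n ∧ distT (m * α) < ε := by
    intro a b hba han heq
    refine ⟨a - b, by omega, by omega, ?_⟩
    have hcast : ((a - b : ℕ) : ℝ) * α = (a : ℝ) * α - (b : ℝ) * α := by
      rw [Nat.cast_sub hba.le]; ring
    rw [hcast]
    refine lt_of_le_of_lt (distT_sub_fract _ _) ?_
    set u := Int.fract ((a : ℝ) * α)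
    set v := Int.fract ((b : ℝ) * α)
    have h1 : (f a : ℝ) ≤ u / ε := Int.floor_le _
    have h2 : u / ε < f a + 1 := Int.lt_floor_add_one _
    have h3 : (f a : ℝ) ≤ v / ε := heq ▸ Int.floor_le _
    have h4 : v / ε < f a + 1 := by rw [heq]; exact Int.lt_floor_add_one _
    have h5 : |u / ε - v / ε| < 1 := by
      rw [abs_lt]; constructor <;> linarith
    have h6 : |u - v| = |u / ε - v / ε| * ε := by
      have huv : u / ε - v / ε = (u - v) / ε := by ring
      rw [huv, abs_div, abs_of_pos hε, div_mul_cancel₀ _ hε.ne']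
    rw [h6]
    nlinarith
  have hmap : ∀ j ∈ Finset.range n, f j ∈ Finset.Icc (0 : ℤ) (⌈1 / ε⌉ - 1) := by
    intro j _
    simp only [Finset.mem_Icc]
    refine ⟨Int.floor_nonneg.2 (div_nonneg (Int.fract_nonneg _) hε.le), ?_⟩
    have h1 : Int.fract ((j : ℝ) * α) / ε < 1 / ε := by
      have := Int.fract_lt_one ((j : ℝ) * α)
      rw [div_lt_div_iff₀ hε hε]
      nlinarith
    have h2 : f j < ⌈1 / ε⌉ :=
      Int.floor_lt.2 (h1.trans_le (Int.le_ceil _))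
    omega
  have hcard : (Finset.Icc (0 : ℤ) (⌈1 / ε⌉ - 1)).card < (Finset.range n).card := by
    rw [Int.card_Icc, Finset.card_range]
    have h1 : (⌈1 / ε⌉ : ℤ) < (n : ℤ) := by exact_mod_cast hn
    have h2 : 0 < ⌈1 / ε⌉ := Int.ceil_pos.2 (by positivity)
    omega
  obtain ⟨j, hj, j', hj', hne, heq⟩ :=
    Finset.exists_ne_map_eq_of_card_lt_of_maps_to hcard hmap
  simp only [Finset.mem_range] at hj hj'
  rcases hne.lt_or_gt with h | h
  · exact key j' j h hj' heq.symm
  · exact key j j' h hj heq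

lemma dirichlet (α : ℝ) (Q : ℕ) (hQ : 1 ≤ Q) :
    ∃ m : ℕ, 1 ≤ m ∧ m ≤ Q ∧ distT (m * α) < 1 / Q := by
  have hQ0 : (0 : ℝ) < Q := by exact_mod_cast hQ
  have hε : (0 : ℝ) < 1 / Q := by positivity
  have hceil : (⌈1 / (1 / (Q : ℝ))⌉ : ℝ) < (Q + 1 : ℕ) := by
    rw [one_div_one_div]
    push_cast
    rw [Int.ceil_natCast]
    push_cast
    linarith
  obtain ⟨m, h1, h2, h3⟩ := pigeon α (1 / Q) hε (Q + 1) hceil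
  exact ⟨m, h1, by omega, h3⟩

lemma prog_one (a v : ℤ) (hv : v ≠ 0) (L : ℕ) :
    ∃ P : Finset ℤ, IsProperProg 1 P ∧
      (∀ n ∈ P, ∃ l : ℕ, l ≤ L ∧ n = a + (l : ℤ) * v) ∧ P.card = L + 1 := by
  classical
  set f : (Fin 1 → ℕ) → ℤ := fun l => a + ∑ i, (l i : ℤ) * (![v]) i with hf
  set S := Fintype.piFinset fun _ : Fin 1 => Finset.range (L + 1) with hS
  have hfeq : ∀ l : Fin 1 → ℕ, f l = a + (l 0 : ℤ) * v := by
    intro l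
    simp [hf, Fin.sum_univ_one]
  have hinj : Set.InjOn f S := by
    intro l hl l' hl' h
    rw [hfeq, hfeq] at h
    have : (l 0 : ℤ) = l' 0 := by
      have := mul_right_cancel₀ hv (by linarith : (l 0 : ℤ) * v = (l' 0 : ℤ) * v)
      exact this
    funext i
    have hi : i = 0 := Subsingleton.elim _ _
    rw [hi]
    exact_mod_cast this
  refine ⟨S.image f, ⟨a, ![v], ![L], ?_, ?_⟩, ?_, ?_⟩
  · congr 1
  · rw [Finset.card_image_of_injOn hinj, hS, Fintype.card_piFinset]
    simp
  · intro n hn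
    obtain ⟨l, hl, rfl⟩ := Finset.mem_image.1 hn
    rw [hS, Fintype.mem_piFinset] at hl
    have := hl 0
    rw [Finset.mem_range] at this
    exact ⟨l 0, by omega, hfeq l⟩
  · rw [Finset.card_image_of_injOn hinj, hS, Fintype.card_piFinset]
    simp

lemma prog_two (a v₀ v₁ : ℤ) (L₀ L₁ : ℕ)
    (hinj : ∀ k₀ k₀' k₁ k₁' : ℕ, k₀ ≤ L₀ → k₀' ≤ L₀ → k₁ ≤ L₁ → k₁' ≤ L₁ →
      (k₀ : ℤ) * v₀ + (k₁ : ℤ) * v₁ = (k₀' : ℤ) * v₀ + (k₁' : ℤ) * v₁ →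
      k₀ = k₀' ∧ k₁ = k₁') :
    ∃ P : Finset ℤ, IsProperProg 2 P ∧
      (∀ n ∈ P, ∃ k₀ k₁ : ℕ, k₀ ≤ L₀ ∧ k₁ ≤ L₁ ∧ n = a + (k₀ : ℤ) * v₀ + (k₁ : ℤ) * v₁) ∧
      P.card = (L₀ + 1) * (L₁ + 1) := by
  classical
  set f : (Fin 2 → ℕ) → ℤ := fun l => a + ∑ i, (l i : ℤ) * (![v₀, v₁]) i with hf
  set S := Fintype.piFinset fun i : Fin 2 => Finset.range ((![L₀, L₁]) i + 1) with hS
  have hfeq : ∀ l : Fin 2 → ℕ, f l = a + ((l 0 : ℤ) * v₀ + (l 1 : ℤ) * v₁) := by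
    intro l
    simp [hf, Fin.sum_univ_two]
  have hmem : ∀ l : Fin 2 → ℕ, l ∈ S → l 0 ≤ L₀ ∧ l 1 ≤ L₁ := by
    intro l hl
    rw [hS, Fintype.mem_piFinset] at hl
    have h0 := hl 0
    have h1 := hl 1
    simp only [Finset.mem_range, Matrix.cons_val_zero, Matrix.cons_val_one,
      Matrix.head_cons] at h0 h1
    omega
  have hinj' : Set.InjOn f S := by
    intro l hl l' hl' h
    rw [hfeq, hfeq] at h
    obtain ⟨ha0, ha1⟩ := hmem l hl
    obtain ⟨hb0, hb1⟩ := hmem l' hl'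
    obtain ⟨e0, e1⟩ := hinj (l 0) (l' 0) (l 1) (l' 1) ha0 hb0 ha1 hb1 (by linarith)
    funext i
    fin_cases i <;> assumption
  refine ⟨S.image f, ⟨a, ![v₀, v₁], ![L₀, L₁], rfl, ?_⟩, ?_, ?_⟩
  · rw [Finset.card_image_of_injOn hinj', hS, Fintype.card_piFinset]
    simp [Fin.prod_univ_two]
  · intro n hn
    obtain ⟨l, hl, rfl⟩ := Finset.mem_image.1 hn
    obtain ⟨h0, h1⟩ := hmem l hl
    exact ⟨l 0, l 1, h0, h1, by rw [hfeq]; ring⟩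
  · rw [Finset.card_image_of_injOn hinj', hS, Fintype.card_piFinset]
    simp [Fin.prod_univ_two]

set_option maxHeartbeats 2000000 in
theorem stmt5 :
    ∃ c : ℝ, 0 < c ∧ ∀ σ : ℝ, 0 < σ → σ < 1 / 100 → ∃ N₀ : ℕ, ∀ N : ℕ, N₀ ≤ N →
      ∀ α : ℝ, 0 < α → α < 1 →
        ∃ d : ℕ, d ≤ 2 ∧ ∃ P : Finset ℤ, IsProperProg d P ∧
          (∀ n ∈ P, |n| ≤ (N : ℤ) ∧ distT ((n : ℝ) * α) < σ) ∧
          c * σ * (N : ℝ) ≤ (P.card : ℝ) := by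
  classical
  refine ⟨1 / 128, by norm_num, ?_⟩
  intro σ hσ0 hσ1
  refine ⟨⌈2000 / σ⌉₊, ?_⟩
  intro N hN α hα0 hα1
  have hσN : 2000 / σ ≤ (N : ℝ) := le_trans (Nat.le_ceil _) (by exact_mod_cast hN)
  have hN0 : (0 : ℝ) < N := lt_of_lt_of_le (by positivity) hσN
  have hσN' : 2000 ≤ σ * N := by
    rw [div_le_iff₀ hσ0] at hσN
    linarith
  -- existence of the minimal "good" denominator r
  have hex : ∃ m : ℕ, 0 < m ∧ distT ((m : ℝ) * α) < σ * m / (8 * N) := by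
    have hQpos : 1 ≤ ⌈8 * (N : ℝ) / σ⌉₊ := Nat.one_le_ceil_iff.2 (by positivity)
    obtain ⟨m, h1, h2, h3⟩ := dirichlet α ⌈8 * (N : ℝ) / σ⌉₊ hQpos
    refine ⟨m, h1, lt_of_lt_of_le h3 ?_⟩
    have hQ : 8 * (N : ℝ) / σ ≤ (⌈8 * (N : ℝ) / σ⌉₊ : ℝ) := Nat.le_ceil _
    have hQ0 : (0 : ℝ) < (⌈8 * (N : ℝ) / σ⌉₊ : ℝ) := by positivity
    have hm1 : (1 : ℝ) ≤ m := by exact_mod_cast h1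
    have step1 : (1 : ℝ) / (⌈8 * (N : ℝ) / σ⌉₊ : ℝ) ≤ σ / (8 * N) := by
      rw [div_le_div_iff₀ hQ0 (by positivity)]
      rw [div_le_iff₀ hσ0] at hQ
      nlinarith
    calc (1 : ℝ) / (⌈8 * (N : ℝ) / σ⌉₊ : ℝ) ≤ σ / (8 * N) := step1
      _ ≤ σ * m / (8 * N) := by
          apply div_le_div_of_nonneg_right ?_ (by positivity)
          nlinarith
  set r := Nat.find hex with hrdef
  obtain ⟨hrpos, hrlt⟩ : 0 < r ∧ distT ((r : ℝ) * α) < σ * r / (8 * N) := Nat.find_spec hex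
  have hrmin : ∀ m : ℕ, m < r → 0 < m → σ * m / (8 * N) ≤ distT ((m : ℝ) * α) := by
    intro m hm hm0
    by_contra h
    exact Nat.find_min hex hm ⟨hm0, not_le.1 h⟩
  clear_value r
  clear hrdef
  set δ' := distT ((r : ℝ) * α) with hδ'def
  have hδ'0 : 0 ≤ δ' := hδ'def ▸ distT_nonneg _
  clear_value δ'
  have hr0 : (0 : ℝ) < r := by exact_mod_cast hrpos
  by_cases hcase : r ≤ ⌈16 / σ⌉₊
  · -- 1-dimensional case: small r
    set L := N / (2 * r) with hLdef
    have h2r : 0 < 2 * r := by omega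
    have hLr : L * (2 * r) ≤ N := Nat.div_mul_le_self N (2 * r)
    have hLrR : (L : ℝ) * (2 * r) ≤ N := by exact_mod_cast hLr
    have hNlt : N < 2 * r * L + 2 * r := by
      have h1 := Nat.div_add_mod N (2 * r)
      have h2 := Nat.mod_lt N h2r
      rw [← hLdef] at h1
      omega
    obtain ⟨P, hProper, hmem, hcard⟩ :=
      prog_one (-(L * r : ℤ)) (r : ℤ) (by exact_mod_cast hrpos.ne') (2 * L)
    refine ⟨1, by norm_num, P, hProper, ?_, ?_⟩
    · intro n hn
      obtain ⟨l, hl, rfl⟩ := hmem n hn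
      have hk : (-(L * r : ℤ) + (l : ℤ) * r) = ((l : ℤ) - L) * r := by ring
      have habs : |(l : ℤ) - L| ≤ (L : ℤ) := abs_le.2 ⟨by omega, by omega⟩
      constructor
      · rw [hk]
        calc |((l : ℤ) - L) * r| = |(l : ℤ) - L| * r := by
              rw [abs_mul, abs_of_nonneg (by positivity : (0:ℤ) ≤ (r:ℤ))]
          _ ≤ (L : ℤ) * r := mul_le_mul_of_nonneg_right habs (by positivity)
          _ ≤ (N : ℤ) := by exact_mod_cast le_trans (by nlinarith : L * r ≤ L * (2 * r)) hLr
      · have hn' : ((-(L * r : ℤ) + (l : ℤ) * r : ℤ) : ℝ) * α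
            = ((((l : ℤ) - L) : ℤ) : ℝ) * ((r : ℝ) * α) := by push_cast; ring
        rw [hn']
        have t := distT_int_mul ((l : ℤ) - L) ((r : ℝ) * α)
        rw [← hδ'def] at t
        have habsR : |((((l : ℤ) - L) : ℤ) : ℝ)| ≤ (L : ℝ) := by exact_mod_cast habs
        have b : |((((l : ℤ) - L) : ℤ) : ℝ)| * δ' ≤ (L : ℝ) * δ' :=
          mul_le_mul_of_nonneg_right habsR hδ'0
        have e2 : (L : ℝ) * δ' ≤ (L : ℝ) * (σ * r / (8 * N)) :=
          mul_le_mul_of_nonneg_left hrlt.le (by positivity)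
        have e3 : (L : ℝ) * (σ * r / (8 * N)) ≤ σ / 16 := by
          have hid : (L : ℝ) * (σ * r / (8 * N)) = ((L : ℝ) * (σ * r)) / (8 * N) := by
            ring
          rw [hid, div_le_div_iff₀ (by positivity) (by norm_num : (0:ℝ) < 16)]
          nlinarith [mul_le_mul_of_nonneg_right hLrR hσ0.le]
        linarith
    · -- cardinality bound
      rw [hcard]
      have hrsmall : (r : ℝ) ≤ 16 / σ + 1 := by
        have := Nat.ceil_lt_add_one (by positivity : (0:ℝ) ≤ 16 / σ)
        have hc : (r : ℝ) ≤ (⌈16 / σ⌉₊ : ℝ) := by exact_mod_cast hcase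
        linarith
      have hσr : σ * r ≤ 17 := by
        have h1 := mul_le_mul_of_nonneg_left hrsmall hσ0.le
        have h2 : σ * (16 / σ + 1) = 16 + σ := by field_simp
        rw [h2] at h1
        linarith
      have hNltR : (N : ℝ) < 2 * r * L + 2 * r := by exact_mod_cast hNlt
      have hL0 : (0 : ℝ) ≤ (L : ℝ) := by positivity
      push_cast
      nlinarith [mul_le_mul_of_nonneg_right hσr hL0, mul_pos hσ0 hN0]
  · -- 2-dimensional case: large r
    push_neg at hcase
    have hQ1 : (16 / σ : ℝ) ≤ (⌈16 / σ⌉₊ : ℝ) := Nat.le_ceil _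
    have hr2 : 2 ≤ r := by
      have : 1 ≤ ⌈16 / σ⌉₊ := Nat.one_le_ceil_iff.2 (by positivity)
      omega
    have hne : (Finset.Icc 1 (r - 1)).Nonempty := ⟨1, by simp; omega⟩
    obtain ⟨q, hqmem, hqmin⟩ :=
      Finset.exists_min_image (Finset.Icc 1 (r - 1)) (fun m => distT ((m : ℝ) * α)) hne
    rw [Finset.mem_Icc] at hqmem
    obtain ⟨hq1, hqr⟩ := hqmem
    set δ := distT ((q : ℝ) * α) with hδdef
    clear_value δ
    have hq0 : (0 : ℝ) < q := by exact_mod_cast hq1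
    have hδlt : δ < σ / 16 := by
      obtain ⟨m₁, hm1, hm2, hm3⟩ := dirichlet α ⌈16 / σ⌉₊ (Nat.one_le_ceil_iff.2 (by positivity))
      have hmem1 : m₁ ∈ Finset.Icc 1 (r - 1) := Finset.mem_Icc.2 ⟨hm1, by omega⟩
      have h4 := hqmin m₁ hmem1
      have h5 : (1 : ℝ) / (⌈16 / σ⌉₊ : ℝ) ≤ σ / 16 := by
        rw [div_le_div_iff₀ (by positivity) (by norm_num : (0:ℝ) < 16)]
        rw [div_le_iff₀ hσ0] at hQ1
        nlinarith
      calc δ ≤ distT ((m₁ : ℝ) * α) := h4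
        _ < 1 / (⌈16 / σ⌉₊ : ℝ) := hm3
        _ ≤ σ / 16 := h5
    have hδge : σ * q / (8 * N) ≤ δ := by
      rw [hδdef]; exact hrmin q (by omega) hq1
    have hδpos : 0 < δ := lt_of_lt_of_le (by positivity) hδge
    have hδge' : σ * q ≤ 8 * N * δ := by
      rw [div_le_iff₀ (by positivity)] at hδge
      linarith
    -- r * δ ≤ 1 + δ
    have hrδ : (r : ℝ) * δ ≤ 1 + δ := by
      by_contra h
      push_neg at h
      have hceil : (⌈1 / δ⌉ : ℝ) < r := by
        have h1 : (⌈1 / δ⌉ : ℝ) < 1 / δ + 1 := Int.ceil_lt_add_one _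
        have h2 : 1 / δ + 1 < r := by
          rw [div_add' _ _ _ hδpos.ne', div_lt_iff₀ hδpos]
          linarith
        linarith
      obtain ⟨m, hm1, hm2, hm3⟩ := pigeon α δ hδpos r hceil
      have h6 : δ ≤ distT ((m : ℝ) * α) := hqmin m (Finset.mem_Icc.2 ⟨hm1, by omega⟩)
      linarith
    set L₁ := ⌊σ / (16 * δ)⌋₊ with hL₁def
    have hx1 : (1 : ℝ) ≤ σ / (16 * δ) := by
      rw [le_div_iff₀ (by positivity)]
      linarith
    have hL₁ge1 : 1 ≤ L₁ := Nat.le_floor (by exact_mod_cast hx1)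
    have hL₁le : (L₁ : ℝ) * (16 * δ) ≤ σ := by
      have := Nat.floor_le (by positivity : (0:ℝ) ≤ σ / (16 * δ))
      rw [le_div_iff₀ (by positivity)] at this
      exact this
    have hL₁lt : σ / (16 * δ) < (L₁ : ℝ) + 1 := Nat.lt_floor_add_one _
    have hL₁lt' : σ < ((L₁ : ℝ) + 1) * (16 * δ) := by
      rw [div_lt_iff₀ (by positivity)] at hL₁lt
      linarith
    set L₂ := N / (4 * r) with hL₂def
    have h4r : 0 < 4 * r := by omega
    have hL₂r : (L₂ : ℝ) * (4 * r) ≤ N := by exact_mod_cast Nat.div_mul_le_self N (4 * r)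
    have hNlt2 : N < 4 * r * L₂ + 4 * r := by
      have h1 := Nat.div_add_mod N (4 * r)
      have h2 := Nat.mod_lt N h4r
      rw [← hL₂def] at h1
      omega
    have hNlt2R : (N : ℝ) < 4 * r * L₂ + 4 * r := by exact_mod_cast hNlt2
    -- the key injectivity property
    have hinj : ∀ k₀ k₀' k₁ k₁' : ℕ, k₀ ≤ 2 * L₁ → k₀' ≤ 2 * L₁ → k₁ ≤ 2 * L₂ → k₁' ≤ 2 * L₂ →
        (k₀ : ℤ) * q + (k₁ : ℤ) * r = (k₀' : ℤ) * q + (k₁' : ℤ) * r →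
        k₀ = k₀' ∧ k₁ = k₁' := by
      intro k₀ k₀' k₁ k₁' h₀ h₀' h₁ h₁' heq
      set i : ℤ := (k₀ : ℤ) - k₀' with hidef
      set j : ℤ := (k₁' : ℤ) - k₁ with hjdef
      have hij : i * q = j * r := by simp only [hidef, hjdef]; push_cast; linarith
      have hi0 : i = 0 := by
        by_contra hi
        have hj : j ≠ 0 := by
          intro hj0
          rw [hj0, zero_mul] at hij
          have : i = 0 := by
            have : (q : ℤ) ≠ 0 := by positivity
            exact (mul_eq_zero.1 hij).resolve_right this
          exact hi this
        have habsi : |i| ≤ 2 * (L₁ : ℤ) := abs_le.2 ⟨by omega, by omega⟩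
        have habsiR : |(i : ℝ)| ≤ 2 * L₁ := by exact_mod_cast habsi
        have hipos : (0 : ℝ) < |(i : ℝ)| := by
          simp only [abs_pos]
          exact_mod_cast hi
        have hjpos : (0 : ℝ) < |(j : ℝ)| := by
          simp only [abs_pos]
          exact_mod_cast hj
        -- exact value of distT on the q-side
        have hδabs : |(q : ℝ) * α - round ((q : ℝ) * α)| = δ := by rw [hδdef]; rfl
        have hsmall : |(i : ℝ) * ((q : ℝ) * α - round ((q : ℝ) * α))| ≤ 1 / 2 := by
          rw [abs_mul, hδabs]
          nlinarith [mul_le_mul_of_nonneg_right habsiR hδpos.le]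
        have hexact : distT (((i * q : ℤ) : ℝ) * α) = |(i : ℝ)| * δ := by
          have hsplit : ((i * q : ℤ) : ℝ) * α
              = ((i * round ((q : ℝ) * α) : ℤ) : ℝ)
                + (i : ℝ) * ((q : ℝ) * α - round ((q : ℝ) * α)) := by
            push_cast
            ring
          rw [hsplit, distT_int_add, distT_eq_abs _ hsmall, abs_mul, hδabs]
        -- upper bound via the r-side
        have hupper : distT (((i * q : ℤ) : ℝ) * α) ≤ |(j : ℝ)| * δ' := by
          rw [hij]
          have : ((j * r : ℤ) : ℝ) * α = (j : ℝ) * ((r : ℝ) * α) := by push_cast; ring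
          rw [this, hδ'def]
          exact distT_int_mul j ((r : ℝ) * α)
        have habseq : |(i : ℝ)| * q = |(j : ℝ)| * r := by
          have h1 : |i * q| = |j * r| := by rw [hij]
          have h2 : |i| * q = |j| * r := by
            rw [abs_mul, abs_mul, abs_of_nonneg (by positivity : (0:ℤ) ≤ (q:ℤ)),
              abs_of_nonneg (by positivity : (0:ℤ) ≤ (r:ℤ))] at h1
            exact h1
          exact_mod_cast h2
        -- derive contradiction
        have hstep : |(j : ℝ)| * δ' < |(j : ℝ)| * (σ * r / (8 * N)) :=
          mul_lt_mul_of_pos_left hrlt hjpos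
        have hlow : |(i : ℝ)| * (σ * q / (8 * N)) ≤ |(i : ℝ)| * δ :=
          mul_le_mul_of_nonneg_left hδge (abs_nonneg _)
        have hmid : |(j : ℝ)| * (σ * r / (8 * N)) = |(i : ℝ)| * (σ * q / (8 * N)) := by
          field_simp
          nlinarith [habseq]
        nlinarith
      refine ⟨by omega, ?_⟩
      rw [hi0, zero_mul] at hij
      have : j = 0 := by
        have hrne : (r : ℤ) ≠ 0 := by exact_mod_cast hrpos.ne'
        exact (mul_eq_zero.1 hij.symm).resolve_right hrne
      omega
    obtain ⟨P, hProper, hmem, hcard⟩ :=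
      prog_two (-((L₁ : ℤ) * q + (L₂ : ℤ) * r)) (q : ℤ) (r : ℤ) (2 * L₁) (2 * L₂) hinj
    refine ⟨2, le_refl 2, P, hProper, ?_, ?_⟩
    · intro n hn
      obtain ⟨k₀, k₁, hk₀, hk₁, rfl⟩ := hmem n hn
      have hrw : (-((L₁ : ℤ) * q + (L₂ : ℤ) * r) + (k₀ : ℤ) * q + (k₁ : ℤ) * r)
          = ((k₀ : ℤ) - L₁) * q + ((k₁ : ℤ) - L₂) * r := by ring
      have habs0 : |(k₀ : ℤ) - L₁| ≤ (L₁ : ℤ) := abs_le.2 ⟨by omega, by omega⟩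
      have habs1 : |(k₁ : ℤ) - L₂| ≤ (L₂ : ℤ) := abs_le.2 ⟨by omega, by omega⟩
      have hL₁q : (L₁ : ℝ) * q * 2 ≤ N := by
        nlinarith [mul_le_mul hL₁le hδge' (by positivity) hσ0.le, mul_pos hσ0 hδpos]
      have hL₂r' : (L₂ : ℝ) * r * 4 ≤ N := by nlinarith
      constructor
      · rw [hrw]
        have h1 : |((k₀ : ℤ) - L₁) * q + ((k₁ : ℤ) - L₂) * r|
            ≤ (L₁ : ℤ) * q + (L₂ : ℤ) * r := by
          calc |((k₀ : ℤ) - L₁) * q + ((k₁ : ℤ) - L₂) * r|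
              ≤ |((k₀ : ℤ) - L₁) * q| + |((k₁ : ℤ) - L₂) * r| := abs_add_le _ _
            _ ≤ (L₁ : ℤ) * q + (L₂ : ℤ) * r := by
                rw [abs_mul, abs_mul, abs_of_nonneg (by positivity : (0:ℤ) ≤ (q:ℤ)),
                  abs_of_nonneg (by positivity : (0:ℤ) ≤ (r:ℤ))]
                gcongr
        refine h1.trans ?_
        have : (L₁ : ℝ) * q + (L₂ : ℝ) * r ≤ N := by linarith
        exact_mod_cast this
      · have hsplit : ((-((L₁ : ℤ) * q + (L₂ : ℤ) * r) + (k₀ : ℤ) * q + (k₁ : ℤ) * r : ℤ) : ℝ) * α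
            = ((((k₀ : ℤ) - L₁) : ℤ) : ℝ) * ((q : ℝ) * α)
              + ((((k₁ : ℤ) - L₂) : ℤ) : ℝ) * ((r : ℝ) * α) := by push_cast; ring
        rw [hsplit]
        have t1 := distT_add_le (((((k₀ : ℤ) - L₁) : ℤ) : ℝ) * ((q : ℝ) * α))
          (((((k₁ : ℤ) - L₂) : ℤ) : ℝ) * ((r : ℝ) * α))
        have t2 := distT_int_mul ((k₀ : ℤ) - L₁) ((q : ℝ) * α)
        have t3 := distT_int_mul ((k₁ : ℤ) - L₂) ((r : ℝ) * α)
        rw [← hδdef] at t2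
        rw [← hδ'def] at t3
        have habs0R : |((((k₀ : ℤ) - L₁) : ℤ) : ℝ)| ≤ (L₁ : ℝ) := by exact_mod_cast habs0
        have habs1R : |((((k₁ : ℤ) - L₂) : ℤ) : ℝ)| ≤ (L₂ : ℝ) := by exact_mod_cast habs1
        have b1 : |((((k₀ : ℤ) - L₁) : ℤ) : ℝ)| * δ ≤ (L₁ : ℝ) * δ :=
          mul_le_mul_of_nonneg_right habs0R hδpos.le
        have b2 : |((((k₁ : ℤ) - L₂) : ℤ) : ℝ)| * δ' ≤ (L₂ : ℝ) * δ' :=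
          mul_le_mul_of_nonneg_right habs1R hδ'0
        have c1 : (L₁ : ℝ) * δ ≤ σ / 16 := by nlinarith
        have c2 : (L₂ : ℝ) * δ' ≤ σ / 32 := by
          have e1 : (L₂ : ℝ) * δ' ≤ (L₂ : ℝ) * (σ * r / (8 * N)) :=
            mul_le_mul_of_nonneg_left hrlt.le (by positivity)
          have e2 : (L₂ : ℝ) * (σ * r / (8 * N)) ≤ σ / 32 := by
            have hid : (L₂ : ℝ) * (σ * r / (8 * N)) = ((L₂ : ℝ) * (σ * r)) / (8 * N) := by ring
            rw [hid, div_le_div_iff₀ (by positivity) (by norm_num : (0:ℝ) < 32)]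
            nlinarith [mul_le_mul_of_nonneg_right hL₂r hσ0.le]
          linarith
        refine lt_of_le_of_lt t1 ?_
        linarith [t2.trans b1, t3.trans b2, c1, c2]
    · -- cardinality bound
      rw [hcard]
      have A : σ ≤ 16 * δ * (2 * (L₁ : ℝ) + 1) := by
        have hL₁R : (1 : ℝ) ≤ (L₁ : ℝ) := by exact_mod_cast hL₁ge1
        nlinarith
      have B : (N : ℝ) ≤ 4 * r * (2 * (L₂ : ℝ) + 1) := by nlinarith
      have P1 : σ * N ≤ (16 * δ * (2 * (L₁ : ℝ) + 1)) * (4 * r * (2 * (L₂ : ℝ) + 1)) :=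
        mul_le_mul A B hN0.le (by positivity)
      have P3 : δ * r ≤ 2 := by nlinarith
      have Xpos : (0 : ℝ) ≤ (2 * (L₁ : ℝ) + 1) * (2 * (L₂ : ℝ) + 1) := by positivity
      push_cast
      nlinarith [mul_nonneg (by linarith : (0:ℝ) ≤ 2 - δ * r) Xpos]
end

section
/- Let $\vec{a} = (a_1, \dots, a_d) \in \mathbb{Z}^d$ be nonzero with $\gcd(a_1, \dots, a_d) = 1$, and let $H = \{\vec{x} \in \mathbb{R}^d : \vec{a} \cdot \vec{x} = 0\}$. Then the $(d-1)$-dimensional volume of a fundamental domain of the lattice $\Lambda = \mathbb{Z}^d \cap H$ (inside the hyperplane $H$) equals $\|\vec{a}\|_2$. -/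
open Matrix Finset

private lemma bezout_finset {ι : Type*} [DecidableEq ι] (s : Finset ι) (f : ι → ℤ) :
    ∃ c : ι → ℤ, ∑ i ∈ s, c i * f i = s.gcd f := by
  classical
  induction s using Finset.induction_on with
  | empty => exact ⟨0, by simp⟩
  | @insert i s hi ih =>
    obtain ⟨c, hc⟩ := ih
    set A := Int.gcdA (f i) (s.gcd f)
    set B := Int.gcdB (f i) (s.gcd f)
    refine ⟨fun j => if j = i then A else B * c j, ?_⟩
    rw [Finset.sum_insert hi, Finset.gcd_insert, ← Int.coe_gcd, Int.gcd_eq_gcd_ab]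
    have h1 : ∑ j ∈ s, (if j = i then A else B * c j) * f j = B * ∑ j ∈ s, c j * f j := by
      rw [Finset.mul_sum]
      refine Finset.sum_congr rfl fun j hj => ?_
      rw [if_neg (fun h : j = i => hi (h ▸ hj))]; ring
    rw [h1, hc]
    simp only [if_true, eq_self_iff_true]
    ring

/-- If `b` is a ℤ-basis of the lattice `ℤᵈ ∩ H`, where `H = {x : a ⬝ x = 0}` and
`gcd(a₁,…,a_d) = 1`, then the `(d-1)`-dimensional volume of the fundamental domain,
i.e. the square root of the Gram determinant of `b`, equals `‖a‖₂`. -/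
theorem stmt6 (d : ℕ) (hd : 1 ≤ d) (a : Fin d → ℤ) (ha : a ≠ 0)
    (hgcd : Finset.univ.gcd a = 1)
    (b : Fin (d - 1) → (Fin d → ℝ))
    (hb : ∀ x : Fin d → ℝ,
      x ∈ Submodule.span ℤ (Set.range b) ↔
        ((∀ k, ∃ m : ℤ, x k = (m : ℝ)) ∧ ∑ k, (a k : ℝ) * x k = 0)) :
    Real.sqrt (Matrix.det (Matrix.of fun i j : Fin (d - 1) => ∑ k, b i k * b j k)) =
      Real.sqrt (∑ k, (a k : ℝ) ^ 2) := by
  obtain ⟨n, rfl⟩ : ∃ n, d = n + 1 := ⟨d - 1, (Nat.succ_pred_eq_of_pos hd).symm⟩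
  -- integer entries and orthogonality of b
  have hbmem : ∀ i, (∀ k, ∃ m : ℤ, b i k = (m : ℝ)) ∧ ∑ k, (a k : ℝ) * b i k = 0 :=
    fun i => (hb (b i)).1 (Submodule.subset_span ⟨i, rfl⟩)
  choose bz hbz using fun i => (hbmem i).1
  have hba : ∀ i, ∑ k, (a k : ℝ) * b i k = 0 := fun i => (hbmem i).2
  -- Bezout vector
  obtain ⟨v, hv⟩ : ∃ v : Fin (n + 1) → ℤ, ∑ k, v k * a k = 1 := by
    obtain ⟨c, hc⟩ := bezout_finset Finset.univ a
    exact ⟨c, by rw [hc, hgcd]⟩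
  -- the integer matrix
  set V : Matrix (Fin (n + 1)) (Fin (n + 1)) ℤ :=
    Matrix.of (Fin.snoc (fun i => bz i) v) with hV
  have hVcast : ∀ i k, V (Fin.castSucc i) k = bz i k := fun i k => by
    simp [hV, Fin.snoc_castSucc]
  have hVlast : ∀ k, V (Fin.last n) k = v k := fun k => by
    simp [hV, Fin.snoc_last]
  -- every standard basis vector is an integer combination of rows of V
  have hW : ∀ j : Fin (n + 1), ∃ w : Fin (n + 1) → ℤ,
      ∀ k, ∑ i, w i * V i k = (Pi.single j 1 : Fin (n+1) → ℤ) k := by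
    intro j
    set x : Fin (n + 1) → ℤ := fun k => (Pi.single j 1 : Fin (n+1) → ℤ) k - a j * v k with hx
    have hsingle : ∑ k, a k * (Pi.single j 1 : Fin (n+1) → ℤ) k = a j := by
      rw [Finset.sum_eq_single_of_mem j (Finset.mem_univ j)]
      · simp
      · intro k _ hk; simp [Pi.single_apply, hk]
    have hax : ∑ k, a k * x k = 0 := by
      simp only [hx, mul_sub, Finset.sum_sub_distrib]
      rw [hsingle]
      have : ∑ k, a k * (a j * v k) = a j * ∑ k, v k * a k := by
        rw [Finset.mul_sum]; exact Finset.sum_congr rfl fun k _ => by ring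
      rw [this, hv, mul_one, sub_self]
    have hmem : (fun k => (x k : ℝ)) ∈ Submodule.span ℤ (Set.range b) := by
      rw [hb]
      refine ⟨fun k => ⟨x k, rfl⟩, ?_⟩
      have : ∑ k, (a k : ℝ) * (x k : ℝ) = ((∑ k, a k * x k : ℤ) : ℝ) := by
        push_cast; ring_nf
      rw [this, hax, Int.cast_zero]
    obtain ⟨c, hc⟩ := (Submodule.mem_span_range_iff_exists_fun ℤ).1 hmem
    set w : Fin (n + 1) → ℤ := Fin.snoc (fun i => c i) (a j) with hw
    refine ⟨w, fun k => ?_⟩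
    rw [Fin.sum_univ_castSucc]
    have hterm : ∀ i : Fin n,
        w (Fin.castSucc i) * V (Fin.castSucc i) k = c i * bz i k := by
      intro i; rw [hVcast, hw, Fin.snoc_castSucc]
    rw [Finset.sum_congr rfl fun i _ => hterm i, hw, Fin.snoc_last, hVlast]
    have hck : ∑ i : Fin n, c i * bz i k = x k := by
      have h := congrFun hc k
      rw [Finset.sum_apply] at h
      have h2 : ((∑ i, c i * bz i k : ℤ) : ℝ) = ((x k : ℤ) : ℝ) := by
        push_cast
        rw [← h]
        refine Finset.sum_congr rfl fun i _ => ?_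
        rw [Pi.smul_apply, ← hbz, zsmul_eq_mul]
      exact_mod_cast h2
    rw [hck]
    simp only [hx]
    ring
  choose w hw using hW
  have hWV : Matrix.of w * V = 1 := by
    ext j k
    rw [Matrix.mul_apply, Matrix.one_apply]
    have := hw j k
    rw [show ∑ i, Matrix.of w j i * V i k = ∑ i, w j i * V i k from rfl, this]
    simp [Pi.single_apply, eq_comm]
  have hdetV : V.det = 1 ∨ V.det = -1 := by
    have h1 : (Matrix.of w).det * V.det = 1 := by rw [← Matrix.det_mul, hWV, Matrix.det_one]
    exact Int.isUnit_iff.mp (IsUnit.of_mul_eq_one _ ((mul_comm _ _).trans h1))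
  set Vr : Matrix (Fin (n + 1)) (Fin (n + 1)) ℝ := V.map (fun z => (z : ℝ)) with hVr
  have hdetVr : Vr.det = (V.det : ℝ) := ((Int.castRingHom ℝ).map_det V).symm
  have hVrUnit : IsUnit Vr.det := by
    rcases hdetV with h | h <;> rw [hdetVr, h] <;> simp
  have hdetVr2 : Vr.det ^ 2 = 1 := by
    rcases hdetV with h | h <;> rw [hdetVr, h] <;> norm_num
  set aR : Fin (n + 1) → ℝ := fun k => (a k : ℝ) with haR
  set cc : Fin (n + 1) → ℝ := Matrix.vecMul aR Vr⁻¹ with hcc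
  have hca : Matrix.vecMul cc Vr = aR := by
    rw [hcc, Matrix.vecMul_vecMul, Matrix.nonsing_inv_mul _ hVrUnit, Matrix.vecMul_one]
  have hcak : ∀ k, aR k = ∑ i, cc i * Vr i k := by
    intro k
    conv_lhs => rw [← hca]
    simp [Matrix.vecMul, dotProduct]
  set B : Matrix (Fin (n + 1)) (Fin (n + 1)) ℝ := Vr.updateRow (Fin.last n) aR with hB
  have hVrcast : ∀ (i : Fin n) k, Vr (Fin.castSucc i) k = b i k := by
    intro i k
    rw [hVr, Matrix.map_apply, hVcast, ← hbz]
  have hVrlast : ∀ k, Vr (Fin.last n) k = (v k : ℝ) := by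
    intro i
    rw [hVr, Matrix.map_apply, hVlast]
  have hBrow : ∀ i : Fin n, B (Fin.castSucc i) = b i := by
    intro i
    funext k
    rw [hB, Matrix.updateRow_ne (Fin.castSucc_lt_last i).ne, hVrcast]
  have hBlast : B (Fin.last n) = aR := by rw [hB, Matrix.updateRow_self]
  set E : Matrix (Fin (n + 1)) (Fin (n + 1)) ℝ :=
    (1 : Matrix (Fin (n + 1)) (Fin (n + 1)) ℝ).updateRow (Fin.last n) cc with hE
  have hBE : B = E * Vr := by
    ext i k
    by_cases hi : i = Fin.last n
    · subst hi
      rw [Matrix.mul_apply]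
      have : ∀ j, E (Fin.last n) j = cc j := fun j => by rw [hE, Matrix.updateRow_self]
      rw [Finset.sum_congr rfl fun j _ => by rw [this j]]
      rw [hB, Matrix.updateRow_self, ← hcak]
    · rw [Matrix.mul_apply, hB, Matrix.updateRow_ne hi]
      have : ∀ j, E i j = (1 : Matrix (Fin (n + 1)) (Fin (n + 1)) ℝ) i j := fun j => by
        rw [hE, Matrix.updateRow_ne hi]
      rw [Finset.sum_congr rfl fun j _ => by rw [this j]]
      simp [Matrix.one_apply, ite_mul]
  have hdetE : E.det = cc (Fin.last n) := by
    have ht : E.BlockTriangular OrderDual.toDual := by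
      intro i j hij
      have hij' : i < j := hij
      rw [hE, Matrix.updateRow_ne (by exact fun h => absurd (h ▸ hij') (by simp [Fin.lt_iff_val_lt_val]; omega)),
        Matrix.one_apply_ne hij'.ne]
    rw [Matrix.det_of_lowerTriangular E ht]
    rw [Finset.prod_eq_single (Fin.last n)
      (fun i _ hi => by rw [hE, Matrix.updateRow_ne hi, Matrix.one_apply_eq])
      (by simp)]
    rw [hE, Matrix.updateRow_self]
  have hdetB : B.det = cc (Fin.last n) * Vr.det := by
    rw [hBE, Matrix.det_mul, hdetE]
  have horth : ∀ i : Fin n, ∑ k, aR k * Vr (Fin.castSucc i) k = 0 := by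
    intro i
    rw [Finset.sum_congr rfl fun k _ => by rw [hVrcast]]
    exact hba i
  have hvlast : ∑ k, aR k * Vr (Fin.last n) k = 1 := by
    rw [Finset.sum_congr rfl fun k _ => by rw [hVrlast]]
    have h1 : ((∑ k, v k * a k : ℤ) : ℝ) = 1 := by rw [hv]; norm_num
    push_cast at h1
    rw [← h1]
    exact Finset.sum_congr rfl fun k _ => by rw [haR]; ring
  have hclast : ∑ k, (a k : ℝ) ^ 2 = cc (Fin.last n) := by
    calc ∑ k, (a k : ℝ) ^ 2 = ∑ k, aR k * ∑ i, cc i * Vr i k := by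
          refine Finset.sum_congr rfl fun k _ => ?_
          rw [← hcak, haR]; ring
      _ = ∑ k, ∑ i, cc i * (aR k * Vr i k) := by
          refine Finset.sum_congr rfl fun k _ => ?_
          rw [Finset.mul_sum]
          exact Finset.sum_congr rfl fun i _ => by ring
      _ = ∑ i, ∑ k, cc i * (aR k * Vr i k) := Finset.sum_comm
      _ = ∑ i, cc i * ∑ k, aR k * Vr i k := by
          refine Finset.sum_congr rfl fun i _ => ?_
          rw [Finset.mul_sum]
      _ = cc (Fin.last n) := by
          rw [Fin.sum_univ_castSucc]
          rw [Finset.sum_congr rfl fun i _ => by rw [horth i]]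
          rw [hvlast]
          simp
  set G : Matrix (Fin (n + 1 - 1)) (Fin (n + 1 - 1)) ℝ :=
    Matrix.of fun i j : Fin (n + 1 - 1) => ∑ k, b i k * b j k with hG
  have hsub : (B * Bᵀ).submatrix Fin.castSucc Fin.castSucc = G := by
    ext i j
    rw [Matrix.submatrix_apply, Matrix.mul_apply, hG]
    simp only [Matrix.of_apply, Matrix.transpose_apply]
    exact Finset.sum_congr rfl fun k _ => by rw [hBrow i, hBrow j]
  have hdetP : (B * Bᵀ).det = (∑ k, (a k : ℝ) ^ 2) * G.det := by
    rw [Matrix.det_succ_row (B * Bᵀ) (Fin.last n), Fin.sum_univ_castSucc]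
    have hzero : ∀ j : Fin n,
        (-1 : ℝ) ^ ((Fin.last n : ℕ) + (Fin.castSucc j : ℕ)) *
          (B * Bᵀ) (Fin.last n) (Fin.castSucc j) *
          ((B * Bᵀ).submatrix (Fin.last n).succAbove (Fin.castSucc j).succAbove).det = 0 := by
      intro j
      have : (B * Bᵀ) (Fin.last n) (Fin.castSucc j) = 0 := by
        rw [Matrix.mul_apply]
        have := hba j
        rw [← this]
        refine Finset.sum_congr rfl fun k _ => ?_
        rw [Matrix.transpose_apply, hBrow j, hBlast, haR]
      rw [this, mul_zero, zero_mul]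
    rw [Finset.sum_congr rfl fun j _ => hzero j, Finset.sum_const_zero, zero_add]
    have h1 : (-1 : ℝ) ^ ((Fin.last n : ℕ) + (Fin.last n : ℕ)) = 1 :=
      Even.neg_one_pow ⟨(Fin.last n : ℕ), rfl⟩
    have h2 : (B * Bᵀ) (Fin.last n) (Fin.last n) = ∑ k, (a k : ℝ) ^ 2 := by
      rw [Matrix.mul_apply]
      refine Finset.sum_congr rfl fun k _ => ?_
      rw [Matrix.transpose_apply, hBlast, haR]; ring
    rw [h1, h2, one_mul, Fin.succAbove_last, hsub]
  have hdetP2 : (B * Bᵀ).det = (∑ k, (a k : ℝ) ^ 2) ^ 2 := by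
    rw [Matrix.det_mul, Matrix.det_transpose, hdetB, ← hclast]
    have : ∀ x y : ℝ, (x * y) * (x * y) = x ^ 2 * y ^ 2 := fun x y => by ring
    rw [this, hdetVr2, mul_one]
  have hpos : 0 < ∑ k, (a k : ℝ) ^ 2 := by
    obtain ⟨k, hk⟩ := Function.ne_iff.mp ha
    refine Finset.sum_pos' (fun k _ => sq_nonneg _) ⟨k, Finset.mem_univ k, ?_⟩
    have : (a k : ℝ) ≠ 0 := Int.cast_ne_zero.mpr hk
    positivity
  have hfinal : G.det = ∑ k, (a k : ℝ) ^ 2 := by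
    have := hdetP.symm.trans hdetP2
    rw [sq] at this
    exact mul_left_cancel₀ hpos.ne' this
  rw [hG] at hfinal
  rw [hfinal]
end

section
/- Let $p$ be a prime with $200N \leq p < 400N$, let $\beta \in \mathbb{R}$, and let $P = \{a + qn : 1 \leq n \leq N'\} \subseteq [N]$ be an arithmetic progression, viewed as a subset of $\mathbb{Z}/p\mathbb{Z}$. Define $f_1 : \mathbb{Z}/p\mathbb{Z} \to \mathbb{C}$ by $f_1(x) = e(\beta x) 1_P(x)$, and let $\hat{f_1}(r) = p^{-1}\sum_{x \in \mathbb{Z}/p\mathbb{Z}} f_1(x) e(-xr/p)$. Then $\sum_{r \in \mathbb{Z}/p\mathbb{Z}} |\hat{f_1}(r)|^{4/3} \leq C$ for some absolute constant $C$, independent of $N$, $p$, $\beta$, and $P$. -/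
open Complex Finset

/-- `e(θ) = e^{2πiθ}`. -/
noncomputable def eR (θ : ℝ) : ℂ := Complex.exp (2 * Real.pi * Complex.I * θ)

lemma eR_add (s t : ℝ) : eR (s + t) = eR s * eR t := by
  simp [eR, ← Complex.exp_add]; ring_nf

lemma eR_int (k : ℤ) : eR k = 1 := by
  rw [eR]
  have := Complex.exp_int_mul_two_pi_mul_I k
  rw [← this]; push_cast; ring_nf

lemma norm_eR (θ : ℝ) : ‖eR θ‖ = 1 := by
  rw [eR, Complex.norm_exp]
  simp [mul_comm, mul_assoc]

lemma eR_pow (θ : ℝ) (n : ℕ) : eR θ ^ n = eR (n * θ) := by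
  rw [eR, eR, ← Complex.exp_nat_mul]; push_cast; ring_nf

lemma norm_eR_sub_one (θ : ℝ) : ‖eR θ - 1‖ = 2 * |Real.sin (Real.pi * θ)| := by
  have h : eR θ - 1 = Complex.exp (Real.pi * θ * I) *
      (Complex.exp (Real.pi * θ * I) - Complex.exp (-(Real.pi * θ) * I)) := by
    rw [mul_sub, ← Complex.exp_add, ← Complex.exp_add, eR]
    ring_nf
    rw [Complex.exp_zero]
    ring
  rw [h, norm_mul]
  have h2 : Complex.exp (Real.pi * θ * I) - Complex.exp (-(Real.pi * θ) * I)
      = 2 * (Real.sin (Real.pi * θ) : ℂ) * I := by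
    rw [Complex.exp_mul_I, Complex.exp_mul_I, Complex.cos_neg, Complex.sin_neg]
    rw [show ((Real.pi : ℂ) * (θ : ℂ)) = ((Real.pi * θ : ℝ) : ℂ) by push_cast; ring,
      ← Complex.ofReal_sin]
    ring
  rw [h2]
  have h3 : ‖Complex.exp (↑(Real.pi * θ) * I)‖ = 1 := Complex.norm_exp_ofReal_mul_I _
  push_cast at h3
  rw [h3, one_mul]
  simp only [norm_mul, Complex.norm_real, Complex.norm_I, Complex.norm_two,
    mul_one, Real.norm_eq_abs]

lemma sin_lb {t : ℝ} (ht : |t| ≤ 1/2) : 2 * |t| ≤ |Real.sin (Real.pi * t)| := by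
  have h1 : Real.sin (Real.pi * |t|) = |Real.sin (Real.pi * t)| := by
    rcases le_or_gt 0 t with h | h
    · rw [_root_.abs_of_nonneg h, _root_.abs_of_nonneg]
      exact Real.sin_nonneg_of_nonneg_of_le_pi (by positivity)
        (by nlinarith [Real.pi_pos, abs_nonneg t, _root_.abs_of_nonneg h])
    · rw [_root_.abs_of_neg h, _root_.abs_of_nonpos, mul_neg, Real.sin_neg]
      exact Real.sin_nonpos_of_nonpos_of_neg_pi_le (by nlinarith [Real.pi_pos])
        (by nlinarith [Real.pi_pos, _root_.abs_of_neg h, ht])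
  rw [← h1]
  have := Real.mul_le_sin (x := Real.pi * |t|) (by positivity)
    (by nlinarith [Real.pi_pos])
  calc 2 * |t| = 2 / Real.pi * (Real.pi * |t|) := by
        field_simp
      _ ≤ Real.sin (Real.pi * |t|) := this

lemma geom_bound (z : ℂ) (hz : ‖z‖ = 1) (hz1 : z ≠ 1) (M : ℕ) :
    ‖∑ n ∈ Finset.Icc 1 M, z ^ n‖ ≤ 2 / ‖z - 1‖ := by
  have hne : z - 1 ≠ 0 := sub_ne_zero.mpr hz1
  have key : ∑ n ∈ Finset.Icc 1 M, z ^ n = z * (z ^ M - 1) / (z - 1) := by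
    have h3 : Finset.Icc 1 M = Finset.Ico 1 (M+1) := by
      rw [Finset.Ico_add_one_right_eq_Icc]
    rw [h3, Finset.sum_Ico_eq_sum_range]
    simp only [Nat.add_sub_cancel, pow_add, pow_one]
    rw [← Finset.mul_sum, geom_sum_eq hz1]
    field_simp
  rw [key, norm_div]
  gcongr
  rw [norm_mul, hz, one_mul]
  calc ‖z ^ M - 1‖ ≤ ‖z ^ M‖ + 1 := by
        simpa using norm_sub_le (z ^ M) 1
    _ = 2 := by rw [norm_pow, hz]; norm_num

lemma cube_ineq {u w : ℝ} (hu : 1 ≤ u) (hw3 : w ^ 3 = u ^ 3 + 1) (hwu : u ≤ w) :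
    u + 3 * u * w ^ 3 ≤ 3 * w ^ 4 := by
  have h1 : (w - u) * (w^2 + w*u + u^2) = 1 := by nlinarith [hw3]
  have hw1 : 1 ≤ w := le_trans hu hwu
  have h2 : w^2 + w*u + u^2 ≤ 3 * w^2 := by nlinarith
  have h3 : 3 * w^2 * (w - u) ≥ 1 := by nlinarith
  nlinarith [pow_pos (lt_of_lt_of_le one_pos hw1) 3, h3]

lemma pseries_aux : ∀ M : ℕ, 1 ≤ M →
    ∑ v ∈ Finset.Icc 1 M, ((v : ℝ)) ^ (-(4:ℝ)/3) ≤ 4 - 3 * (M : ℝ) ^ (-(1:ℝ)/3) := by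
  intro M hM
  induction M, hM using Nat.le_induction with
  | base => norm_num
  | succ M hM ih =>
    rw [Finset.sum_Icc_succ_top (by omega : 1 ≤ M + 1)]
    have hM0 : (0:ℝ) < M := by exact_mod_cast hM
    have hM1 : (1:ℝ) ≤ M := by exact_mod_cast hM
    set x : ℝ := (M : ℝ)
    have hx1 : (0:ℝ) ≤ x + 1 := by linarith
    set u : ℝ := x ^ ((1:ℝ)/3) with hu_def
    set w : ℝ := (x + 1) ^ ((1:ℝ)/3) with hw_def
    have hu0 : 0 < u := Real.rpow_pos_of_pos hM0 _
    have hw0 : 0 < w := Real.rpow_pos_of_pos (by linarith) _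
    have hu3 : u ^ 3 = x := by
      rw [hu_def, ← Real.rpow_natCast (x ^ ((1:ℝ)/3)) 3, ← Real.rpow_mul hM0.le]
      norm_num
    have hw3 : w ^ 3 = x + 1 := by
      rw [hw_def, ← Real.rpow_natCast ((x+1) ^ ((1:ℝ)/3)) 3, ← Real.rpow_mul hx1]
      norm_num
    have hu1 : 1 ≤ u := by
      exact Real.one_le_rpow hM1 (by norm_num)
    have hwu : u ≤ w := Real.rpow_le_rpow (z := (1:ℝ)/3) hM0.le (by linarith) (by norm_num)
    have hcast : ((M + 1 : ℕ) : ℝ) = x + 1 := by push_cast; ring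
    have hru : x ^ (-(1:ℝ)/3) = u⁻¹ := by
      rw [hu_def, ← Real.rpow_neg hM0.le]; norm_num
    have hrw : (x + 1) ^ (-(1:ℝ)/3) = w⁻¹ := by
      rw [hw_def, ← Real.rpow_neg hx1]; norm_num
    have hrw4 : (x + 1) ^ (-(4:ℝ)/3) = (w ^ 4)⁻¹ := by
      rw [hw_def, ← Real.rpow_natCast ((x+1) ^ ((1:ℝ)/3)) 4, ← Real.rpow_mul hx1,
        ← Real.rpow_neg hx1]
      norm_num
    rw [hcast, hrw4, hrw]
    have key := cube_ineq hu1 (by rw [hu3, hw3]) hwu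
    have hdiff : 4 - 3 * w⁻¹ - ((4 - 3 * x ^ (-(1:ℝ)/3)) + (w ^ 4)⁻¹)
        = (3 * w ^ 4 - (u + 3 * u * w ^ 3)) / (u * w ^ 4) := by
      rw [hru]
      field_simp
      ring
    have : 0 ≤ 4 - 3 * w⁻¹ - ((4 - 3 * x ^ (-(1:ℝ)/3)) + (w ^ 4)⁻¹) := by
      rw [hdiff]
      apply div_nonneg (by linarith) (by positivity)
    linarith [ih]

lemma sum_zmod {M : Type*} [AddCommMonoid M] (p : ℕ) [NeZero p] (G : ℕ → M) :
    ∑ x : ZMod p, G x.val = ∑ u ∈ Finset.range p, G u := by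
  apply Finset.sum_nbij' (i := fun x : ZMod p => x.val) (j := fun u : ℕ => (u : ZMod p))
  · intro a _; exact Finset.mem_range.mpr (ZMod.val_lt a)
  · intro a _; exact Finset.mem_univ _
  · intro a _; exact ZMod.natCast_rightInverse a
  · intro a ha; exact ZMod.val_cast_of_lt (Finset.mem_range.mp ha)
  · intro a _; rfl

lemma sum_bij_mul {p : ℕ} [NeZero p] (hp : p.Prime) (c : ZMod p) (q : ZMod p) (hq : q ≠ 0)
    (G : ZMod p → ℝ) : ∑ r : ZMod p, G (c - q * r) = ∑ s : ZMod p, G s := by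
  haveI : Fact p.Prime := ⟨hp⟩
  apply Fintype.sum_bijective (fun r : ZMod p => c - q * r)
  · have hinj : Function.Injective (fun r : ZMod p => c - q * r) := by
      intro x y hxy
      simp only at hxy
      have : q * x = q * y := by linear_combination -hxy
      exact mul_left_cancel₀ hq this
    exact Finite.injective_iff_bijective.mp hinj
  · intro x; rfl

lemma dist_lb {p u : ℕ} (hp : 0 < p) (hu : u < p) {θ : ℝ} (hθ0 : 0 ≤ θ) (hθ1 : θ < 1)
    (k : ℤ) (j : ℤ) :
    ((min u (p - 1 - u) : ℕ) : ℝ) / p ≤ |((u + θ) / p + k) - j| := by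
  have hp0 : (0:ℝ) < p := by exact_mod_cast hp
  have hup : (u:ℝ) + θ < p := by
    have : (u:ℝ) + 1 ≤ p := by exact_mod_cast hu
    linarith
  have hmin1 : ((min u (p - 1 - u) : ℕ) : ℝ) ≤ u := by exact_mod_cast Nat.min_le_left _ _
  have hmin2 : ((min u (p - 1 - u) : ℕ) : ℝ) ≤ (p:ℝ) - 1 - u := by
    have h1 : ((min u (p - 1 - u) : ℕ) : ℝ) ≤ ((p - 1 - u : ℕ) : ℝ) := by
      exact_mod_cast Nat.min_le_right _ _
    have key : (p - 1 - u) + (u + 1) = p := by omega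
    have h2 : ((p - 1 - u : ℕ) : ℝ) + ((u:ℝ) + 1) = p := by exact_mod_cast key
    linarith
  set x : ℝ := ((u:ℝ) + θ) / p with hx
  have hx0 : 0 ≤ x := by positivity
  have hx1 : x < 1 := by rw [hx, div_lt_one hp0]; exact hup
  have hxu : (u:ℝ)/p ≤ x := by rw [hx]; gcongr; linarith
  rcases le_or_gt (j - k) 0 with hi | hi
  · have hik : ((j:ℝ) - k) ≤ 0 := by exact_mod_cast hi
    calc ((min u (p - 1 - u) : ℕ) : ℝ) / p ≤ (u:ℝ)/p := by gcongr
      _ ≤ x := hxu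
      _ ≤ x + ↑k - ↑j := by linarith
      _ ≤ |x + ↑k - ↑j| := le_abs_self _
  · have h1 : (1:ℝ) ≤ (j:ℝ) - k := by exact_mod_cast hi
    calc ((min u (p - 1 - u) : ℕ) : ℝ) / p ≤ ((p:ℝ) - 1 - u)/p := by gcongr
      _ ≤ 1 - x := by
        rw [hx, div_le_iff₀ hp0]
        have hxp : x * p = u + θ := by rw [hx]; field_simp
        nlinarith [hxp]
      _ ≤ -(x + ↑k - ↑j) := by linarith
      _ ≤ |x + ↑k - ↑j| := neg_le_abs _

theorem stmt11 :
    ∃ C : ℝ, 0 < C ∧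
      ∀ (N N' a q : ℕ) (p : ℕ) [NeZero p] (_ : p.Prime) (_ : 200 * N ≤ p) (_ : p < 400 * N)
        (β : ℝ) (P : Finset ℕ),
        P = (Finset.Icc 1 N').image (fun n => a + q * n) →
        P ⊆ Finset.Icc 1 N →
        ∀ f₁ : ZMod p → ℂ,
          (f₁ = fun x => if x.val ∈ P then eR (β * x.val) else 0) →
          ∀ fhat : ZMod p → ℂ,
            (fhat = fun r => (p : ℂ)⁻¹ *
              ∑ x : ZMod p, f₁ x * eR (-(x.val * r.val : ℝ) / p)) →
            ∑ r : ZMod p, ‖fhat r‖ ^ ((4 : ℝ) / 3) ≤ C := by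
  refine ⟨16, by norm_num, ?_⟩
  intro N N' a q p _ hp hpN hNp β P hP hPN f₁ hf₁ fhat hfhat
  have hppos : 0 < p := hp.pos
  have hp2 : 2 ≤ p := hp.two_le
  have hp0 : (0:ℝ) < p := by exact_mod_cast hppos
  have hN1 : 1 ≤ N := by omega
  have hNltp : N < p := by omega
  have hPrange : P ⊆ Finset.range p := by
    intro m hm
    have := hPN hm
    rw [Finset.mem_Icc] at this
    rw [Finset.mem_range]
    omega
  -- Step 1: formula for fhat
  have hform : ∀ r : ZMod p, fhat r = (p:ℂ)⁻¹ * ∑ m ∈ P, eR (m * (β - r.val / p)) := by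
    intro r
    simp only [hfhat, hf₁]
    congr 1
    calc ∑ x : ZMod p, (if x.val ∈ P then eR (β * x.val) else 0) * eR (-(x.val * r.val : ℝ)/p)
        = ∑ x : ZMod p, (fun m : ℕ => if m ∈ P then eR (m * (β - r.val/p)) else 0) x.val := by
          refine Finset.sum_congr rfl (fun x _ => ?_)
          by_cases hx : x.val ∈ P
          · simp only [hx, if_true, ite_mul, zero_mul, ← eR_add]
            congr 1
            field_simp
            ring
          · simp [hx]
      _ = ∑ u ∈ Finset.range p, (fun m : ℕ => if m ∈ P then eR (m * (β - r.val/p)) else 0) u :=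
          sum_zmod p (fun m : ℕ => if m ∈ P then eR (m * (β - r.val/p)) else 0)
      _ = ∑ m ∈ P, eR (m * (β - r.val/p)) := by
          simp only []
          rw [Finset.sum_ite_mem, Finset.inter_eq_right.mpr hPrange]
  -- trivial bound
  have htriv : ∀ r : ZMod p, ‖fhat r‖ ≤ (P.card : ℝ) / p := by
    intro r
    rw [hform r, norm_mul]
    have h1 : ‖(p:ℂ)⁻¹‖ = (p:ℝ)⁻¹ := by
      rw [norm_inv, Complex.norm_natCast]
    rw [h1]
    have h2 : ‖∑ m ∈ P, eR (m * (β - r.val/p))‖ ≤ (P.card : ℝ) := by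
      calc ‖∑ m ∈ P, eR (m * (β - r.val/p))‖ ≤ ∑ m ∈ P, ‖eR (m * (β - r.val/p))‖ :=
            norm_sum_le _ _
        _ = ∑ _m ∈ P, (1:ℝ) := Finset.sum_congr rfl (fun m _ => norm_eR _)
        _ = P.card := by simp
    calc (p:ℝ)⁻¹ * ‖∑ m ∈ P, eR (m * (β - r.val/p))‖ ≤ (p:ℝ)⁻¹ * P.card := by
          gcongr
      _ = P.card / p := by ring
  by_cases hsmall : q = 0 ∨ N' = 0
  · -- degenerate case : P.card ≤ 1
    have hcard : P.card ≤ 1 := by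
      rcases hsmall with h | h
      · subst h
        rw [hP]
        calc ((Finset.Icc 1 N').image (fun n => a + 0 * n)).card
            ≤ ({a} : Finset ℕ).card := by
              apply Finset.card_le_card
              intro x hx
              simp only [Finset.mem_image] at hx
              obtain ⟨n, _, hn⟩ := hx
              simp at hn ⊢
              omega
          _ = 1 := Finset.card_singleton a
      · subst h
        rw [hP]
        simp
    have hb : ∀ r : ZMod p, ‖fhat r‖ ^ ((4:ℝ)/3) ≤ (p:ℝ)⁻¹ := by
      intro r
      have h1 : ‖fhat r‖ ≤ (p:ℝ)⁻¹ := by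
        calc ‖fhat r‖ ≤ (P.card : ℝ)/p := htriv r
          _ ≤ 1/(p:ℝ) := by
            gcongr
            exact_mod_cast hcard
          _ = (p:ℝ)⁻¹ := one_div (p:ℝ)
      calc ‖fhat r‖ ^ ((4:ℝ)/3) ≤ ((p:ℝ)⁻¹) ^ ((4:ℝ)/3) :=
            Real.rpow_le_rpow (norm_nonneg _) h1 (by norm_num)
        _ ≤ ((p:ℝ)⁻¹) ^ ((1:ℝ)) := by
            apply Real.rpow_le_rpow_of_exponent_ge (by positivity) _ (by norm_num)
            rw [inv_le_one_iff₀]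
            right
            exact_mod_cast hppos
        _ = (p:ℝ)⁻¹ := Real.rpow_one _
    calc ∑ r : ZMod p, ‖fhat r‖ ^ ((4:ℝ)/3) ≤ ∑ _r : ZMod p, (p:ℝ)⁻¹ :=
          Finset.sum_le_sum (fun r _ => hb r)
      _ = (Fintype.card (ZMod p)) * (p:ℝ)⁻¹ := by
          rw [Finset.sum_const, nsmul_eq_mul]; rfl
      _ = 1 := by
          rw [ZMod.card p]
          field_simp
      _ ≤ 16 := by norm_num
  · push_neg at hsmall
    obtain ⟨hq0, hN'0⟩ := hsmall
    have hq1 : 1 ≤ q := Nat.one_le_iff_ne_zero.mpr hq0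
    have hN'1 : 1 ≤ N' := Nat.one_le_iff_ne_zero.mpr hN'0
    have haq : a + q ∈ P := by
      rw [hP, Finset.mem_image]
      exact ⟨1, Finset.mem_Icc.mpr ⟨le_refl 1, hN'1⟩, by ring⟩
    have haqN : a + q ≤ N := (Finset.mem_Icc.mp (hPN haq)).2
    have hqp : q < p := by omega
    have hqz : ((q : ℕ) : ZMod p) ≠ 0 := by
      rw [Ne, ZMod.natCast_eq_zero_iff]
      intro hdvd
      have := Nat.le_of_dvd (by omega) hdvd
      omega
    -- setup
    set μ : ℝ := (q:ℝ) * β * p with hμ_def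
    set m₀ : ℤ := ⌊μ⌋ with hm₀
    set θ₀ : ℝ := Int.fract μ with hθ₀
    set c₀ : ZMod p := ((m₀ : ℤ) : ZMod p) with hc₀
    set qz : ZMod p := ((q : ℕ) : ZMod p) with hqz_def
    set H : ℕ → ℝ := fun u => if u = 0 then 1 else (u:ℝ) ^ (-(4:ℝ)/3) with hH
    have hHnonneg : ∀ u, 0 ≤ H u := by
      intro u
      rw [hH]
      by_cases h : u = 0
      · simp [h]
      · simp only [h, if_false]
        positivity
    -- pointwise bound
    have hpoint : ∀ r : ZMod p, ‖fhat r‖ ^ ((4:ℝ)/3)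
        ≤ H (min (c₀ - qz * r).val (p - 1 - (c₀ - qz * r).val)) := by
      intro r
      set s : ZMod p := c₀ - qz * r with hs
      set u : ℕ := s.val with hu
      set v : ℕ := min u (p - 1 - u) with hv
      have hnorm1 : ‖fhat r‖ ≤ 1 := by
        calc ‖fhat r‖ ≤ (P.card : ℝ)/p := htriv r
          _ ≤ 1 := by
            rw [div_le_one hp0]
            exact_mod_cast (Finset.card_le_card hPrange).trans_eq (Finset.card_range p)
      by_cases hv0 : v = 0
      · have hHv : H v = 1 := by rw [hH]; simp [hv0]
        rw [hv0] at hHv ⊢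
        rw [hHv]
        exact Real.rpow_le_one (norm_nonneg _) hnorm1 (by norm_num)
      · have hv1 : 1 ≤ v := Nat.one_le_iff_ne_zero.mpr hv0
        have hvR : (1:ℝ) ≤ (v:ℝ) := by exact_mod_cast hv1
        -- congruence
        have hcong : (((m₀ : ℤ) - (q * r.val : ℕ) - (u : ℕ) : ℤ) : ZMod p) = 0 := by
          push_cast
          have h1 : ((r.val : ℕ) : ZMod p) = r := ZMod.natCast_rightInverse r
          have h2 : ((u : ℕ) : ZMod p) = s := ZMod.natCast_rightInverse s
          rw [h1, h2, hs, hc₀, hqz_def]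
          ring
        obtain ⟨k, hk⟩ : ∃ k : ℤ, (m₀ : ℤ) - (q * r.val : ℕ) - (u:ℕ) = p * k :=
          (ZMod.intCast_zmod_eq_zero_iff_dvd _ p).mp hcong
        set α : ℝ := (q:ℝ) * (β - r.val / p) with hα_def
        have hα : α = ((u:ℝ) + θ₀)/p + k := by
          have hcast : (m₀:ℝ) - (q:ℝ) * r.val - u = p * k := by
            have : ((m₀ : ℤ) - (q * r.val : ℕ) - (u:ℕ) : ℤ) = ((p:ℤ) * k) := hk
            exact_mod_cast this
          have hfl : (m₀:ℝ) + θ₀ = (q:ℝ) * β * p := by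
            rw [hθ₀, hm₀]
            rw [Int.floor_add_fract μ]
          have hdivp : ((r.val:ℝ)/p) * p = r.val := div_mul_cancel₀ _ hp0.ne'
          have hmul : α * p = (u:ℝ) + θ₀ + k * p := by
            rw [hα_def]
            linear_combination hcast - hfl - (q:ℝ) * hdivp
          have h9 : α = ((u:ℝ) + θ₀ + k*p)/p := eq_div_of_mul_eq hp0.ne' hmul
          rw [h9]
          field_simp
        have hdist : ∀ j : ℤ, ((v:ℕ):ℝ)/p ≤ |α - j| := by
          intro j
          rw [hα, hv, hu]
          exact dist_lb hppos (ZMod.val_lt s) (Int.fract_nonneg μ) (Int.fract_lt_one μ) k j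
        set t : ℝ := α - round α with ht_def
        have ht2 : |t| ≤ 1/2 := abs_sub_round α
        have htv : ((v:ℕ):ℝ)/p ≤ |t| := hdist (round α)
        have ht0 : 0 < |t| := lt_of_lt_of_le (by positivity) htv
        have heRt : eR α = eR t := by
          have : α = t + (round α : ℝ) := by rw [ht_def]; ring
          rw [this, eR_add, eR_int, mul_one]
        have hz1 : eR α ≠ 1 := by
          intro hcontr
          rw [heRt, eR, Complex.exp_eq_one_iff] at hcontr
          obtain ⟨n, hn⟩ := hcontr
          have hI : (2 : ℂ) * Real.pi * I ≠ 0 := by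
            simp [Complex.I_ne_zero, Real.pi_ne_zero]
          have htn : (t : ℂ) = n := by
            have h2 : (2 : ℂ) * Real.pi * I * t = (2 : ℂ) * Real.pi * I * n := by
              rw [hn]; ring
            exact mul_left_cancel₀ hI h2
          have htn' : t = (n : ℝ) := by exact_mod_cast htn
          rcases eq_or_ne n 0 with h0 | h0
          · rw [h0] at htn'
            simp [htn'] at ht0
          · have : (1:ℝ) ≤ |t| := by
              rw [htn']
              exact_mod_cast Int.one_le_abs h0
            linarith
        -- geometric structure
        have hinj : ∀ x ∈ Finset.Icc 1 N', ∀ y ∈ Finset.Icc 1 N',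
            a + q * x = a + q * y → x = y := by
          intro x _ y _ hxy
          have : q * x = q * y := by omega
          exact Nat.eq_of_mul_eq_mul_left (by omega) this
        have hsum : ∑ m ∈ P, eR (m * (β - r.val/p))
            = eR (a * (β - r.val/p)) * ∑ n ∈ Finset.Icc 1 N', (eR α) ^ n := by
          rw [hP, Finset.sum_image hinj, Finset.mul_sum]
          refine Finset.sum_congr rfl (fun n _ => ?_)
          rw [eR_pow, ← eR_add]
          congr 1
          rw [hα_def]
          push_cast
          ring
        have hzn : ‖eR α - 1‖ ≥ 4 * ((v:ℝ)/p) := by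
          rw [heRt, norm_eR_sub_one]
          have hs2 := sin_lb ht2
          linarith [htv, hs2]
        have hbound : ‖fhat r‖ ≤ 1/(2*(v:ℝ)) := by
          rw [hform r, hsum, norm_mul, norm_mul, norm_eR]
          have h1 : ‖(p:ℂ)⁻¹‖ = (p:ℝ)⁻¹ := by rw [norm_inv, Complex.norm_natCast]
          rw [h1, one_mul]
          have hgeo := geom_bound (eR α) (norm_eR α) hz1 N'
          have hpos : (0:ℝ) < 4 * ((v:ℝ)/p) := by positivity
          calc (p:ℝ)⁻¹ * ‖∑ n ∈ Finset.Icc 1 N', (eR α)^n‖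
              ≤ (p:ℝ)⁻¹ * (2 / ‖eR α - 1‖) := by gcongr
            _ ≤ (p:ℝ)⁻¹ * (2 / (4 * ((v:ℝ)/p))) := by
                gcongr
            _ = 1/(2*(v:ℝ)) := by
                field_simp
                ring
        have hle : ‖fhat r‖ ≤ (v:ℝ)⁻¹ := by
          refine hbound.trans ?_
          rw [one_div]
          exact inv_anti₀ (by positivity) (by linarith)
        have hfinal : ‖fhat r‖ ^ ((4:ℝ)/3) ≤ (v:ℝ) ^ (-(4:ℝ)/3) := by
          calc ‖fhat r‖ ^ ((4:ℝ)/3) ≤ ((v:ℝ)⁻¹) ^ ((4:ℝ)/3) :=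
                Real.rpow_le_rpow (norm_nonneg _) hle (by norm_num)
            _ = (v:ℝ) ^ (-(4:ℝ)/3) := by
                rw [Real.inv_rpow (by positivity : (0:ℝ) ≤ (v:ℝ))]
                rw [← Real.rpow_neg (by positivity : (0:ℝ) ≤ (v:ℝ))]
                norm_num
        have hHv : H v = (v:ℝ) ^ (-(4:ℝ)/3) := by rw [hH]; simp [hv0]
        rw [hHv]
        exact hfinal
    -- summation
    have hsum_bound : ∑ r : ZMod p, ‖fhat r‖ ^ ((4:ℝ)/3)
        ≤ ∑ u ∈ Finset.range p, (H u + H (p - 1 - u)) := by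
      calc ∑ r : ZMod p, ‖fhat r‖ ^ ((4:ℝ)/3)
          ≤ ∑ r : ZMod p, H (min (c₀ - qz * r).val (p - 1 - (c₀ - qz * r).val)) :=
            Finset.sum_le_sum (fun r _ => hpoint r)
        _ = ∑ s : ZMod p, H (min s.val (p - 1 - s.val)) :=
            sum_bij_mul hp c₀ qz hqz (fun s => H (min s.val (p - 1 - s.val)))
        _ = ∑ u ∈ Finset.range p, H (min u (p - 1 - u)) :=
            sum_zmod p (fun u => H (min u (p - 1 - u)))
        _ ≤ ∑ u ∈ Finset.range p, (H u + H (p - 1 - u)) := by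
            refine Finset.sum_le_sum (fun u _ => ?_)
            rcases Nat.le_total u (p - 1 - u) with h | h
            · rw [min_eq_left h]
              exact le_add_of_nonneg_right (hHnonneg _)
            · rw [min_eq_right h]
              exact le_add_of_nonneg_left (hHnonneg _)
    have hHsum : ∑ u ∈ Finset.range p, H u ≤ 5 := by
      have hsplit : Finset.range p = insert 0 (Finset.Icc 1 (p-1)) := by
        ext x
        simp only [Finset.mem_range, Finset.mem_insert, Finset.mem_Icc]
        omega
      rw [hsplit, Finset.sum_insert (by simp)]
      have hH0 : H 0 = 1 := by rw [hH]; simp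
      have hrest : ∑ u ∈ Finset.Icc 1 (p-1), H u
          = ∑ u ∈ Finset.Icc 1 (p-1), ((u:ℝ)) ^ (-(4:ℝ)/3) := by
        refine Finset.sum_congr rfl (fun u hu => ?_)
        rw [Finset.mem_Icc] at hu
        rw [hH]
        simp only [if_neg (by omega : ¬ u = 0)]
      have hps := pseries_aux (p-1) (by omega)
      have : (0:ℝ) ≤ ((p-1 : ℕ):ℝ) ^ (-(1:ℝ)/3) := by positivity
      rw [hH0, hrest]
      linarith
    calc ∑ r : ZMod p, ‖fhat r‖ ^ ((4:ℝ)/3)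
        ≤ ∑ u ∈ Finset.range p, (H u + H (p - 1 - u)) := hsum_bound
      _ = ∑ u ∈ Finset.range p, H u + ∑ u ∈ Finset.range p, H (p - 1 - u) :=
          Finset.sum_add_distrib
      _ = ∑ u ∈ Finset.range p, H u + ∑ u ∈ Finset.range p, H u := by
          rw [Finset.sum_range_reflect (fun u => H u) p]
      _ ≤ 5 + 5 := by linarith [hHsum]
      _ ≤ 16 := by norm_num
end
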